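/- For every d ≥ 2 there exists p* < 1 such that for Bernoulli bond percolation on B_d(n) with parameter p > p*, there exist constants c_1 > 0 and c_2 > 0 such that asymptotically almost surely every minimal cutset B separating some pair of vertices of B_d(n), with |B| ≥ c_1 log n, contains at least c_2 |B| open edges. -/

import Mathlib

open MeasureTheory Filter
open scoped ENNReal Classical

noncomputable section

/-- Vertices of `ℤ^d`. -/
abbrev Vert (d : ℕ) := Fin d → ℤ

/-- (Oriented) edges of `ℤ^d`: `(v, i)` is the edge from `v` to `v + eᵢ`. -/
abbrev EdgeZ (d : ℕ) := Vert d × Fin d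

def unitVec (d : ℕ) (i : Fin d) : Vert d := fun j => if j = i then 1 else 0

/-- Second endpoint of an edge. -/
def edgeSnd {d : ℕ} (e : EdgeZ d) : Vert d := e.1 + unitVec d e.2

/-- The box `{-n, …, n}^d`. -/
def boxFinset (d n : ℕ) : Finset (Vert d) :=
  Fintype.piFinset fun _ => Finset.Icc (-(n : ℤ)) (n : ℤ)

/-- The edges of the box `B_d(n)`. -/
def boxEdgeFinset (d n : ℕ) : Finset (EdgeZ d) :=
  (boxFinset d n ×ˢ (Finset.univ : Finset (Fin d))).filter fun e => edgeSnd e ∈ boxFinset d n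

/-- ℓ¹ distance on `ℤ^d`. -/
def l1dist {d : ℕ} (v w : Vert d) : ℤ := ∑ i, |v i - w i|

/-- Lattice adjacency: ℓ¹ distance one. -/
def latAdj {d : ℕ} (v w : Vert d) : Prop := l1dist v w = 1

/-- Bernoulli(p) measure on `Bool`. -/
def bern (p : ℝ) : Measure Bool :=
  (PMF.bernoulli (min (Real.toNNReal p) 1) (min_le_right _ _)).toMeasure

instance (p : ℝ) : IsProbabilityMeasure (bern p) := by
  unfold bern; infer_instance

/-- Bernoulli bond percolation on the box `B_d(n)`: the edges of the box are
open independently with probability `p`; edges outside the box are closed. -/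
def bondMeasure (d n : ℕ) (p : ℝ) : Measure (EdgeZ d → Bool) :=
  (Measure.pi fun _ : {e // e ∈ boxEdgeFinset d n} => bern p).map
    fun ω e => if h : e ∈ boxEdgeFinset d n then ω ⟨e, h⟩ else false

/-- Bernoulli site percolation on the box `B_d(n)`. -/
def siteMeasure (d n : ℕ) (p : ℝ) : Measure (Vert d → Bool) :=
  (Measure.pi fun _ : {v // v ∈ boxFinset d n} => bern p).map
    fun η v => if h : v ∈ boxFinset d n then η ⟨v, h⟩ else false

/-- Two vertices joined by an open edge of the box `B_d(n)`. -/
def openAdj (d n : ℕ) (ω : EdgeZ d → Bool) (v w : Vert d) : Prop :=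
  ∃ e ∈ boxEdgeFinset d n, ω e = true ∧
    ((e.1 = v ∧ edgeSnd e = w) ∨ (e.1 = w ∧ edgeSnd e = v))

/-- Connectivity by open edges inside the box. -/
def openConn (d n : ℕ) (ω : EdgeZ d → Bool) : Vert d → Vert d → Prop :=
  Relation.ReflTransGen (openAdj d n ω)

/-- The open cluster of `v` inside the box `B_d(n)`. -/
def cluster (d n : ℕ) (ω : EdgeZ d → Bool) (v : Vert d) : Finset (Vert d) :=
  (boxFinset d n).filter fun w => openConn d n ω v w

/-- Number of open edges with both endpoints in `C`. -/
def openEdgeCount (d n : ℕ) (ω : EdgeZ d → Bool) (C : Finset (Vert d)) : ℕ :=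
  ((boxEdgeFinset d n).filter fun e => ω e = true ∧ e.1 ∈ C ∧ edgeSnd e ∈ C).card

def IsCluster (d n : ℕ) (ω : EdgeZ d → Bool) (C : Finset (Vert d)) : Prop :=
  ∃ v ∈ boxFinset d n, C = cluster d n ω v

/-- `C` is an open cluster of `B_d(n)` with the maximal number of open edges,
i.e. `C = 𝒞_d(n)`. -/
def IsLargestCluster (d n : ℕ) (ω : EdgeZ d → Bool) (C : Finset (Vert d)) : Prop :=
  IsCluster d n ω C ∧
    ∀ C', IsCluster d n ω C' → openEdgeCount d n ω C' ≤ openEdgeCount d n ω C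

/-- Number of open edges with one endpoint in `A` and the other in `B`. -/
def openEdgesBetween (d n : ℕ) (ω : EdgeZ d → Bool) (A B : Finset (Vert d)) : ℕ :=
  ((boxEdgeFinset d n).filter fun e => ω e = true ∧
    ((e.1 ∈ A ∧ edgeSnd e ∈ B) ∨ (e.1 ∈ B ∧ edgeSnd e ∈ A))).card

section WalkDefs

variable {V : Type*} [DecidableEq V]

/-- Degree of `x` in the graph with vertex set `C` and adjacency relation `R`. -/
def rDeg (R : V → V → Prop) (C : Finset V) (x : V) : ℕ := (C.filter fun w => R x w).card

/-- Sum of the degrees (twice the number of edges). -/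
def rTotal (R : V → V → Prop) (C : Finset V) : ℕ := ∑ x ∈ C, rDeg R C x

/-- Stationary probability of the set `A` for simple random walk: `π(A) = Σ_{x∈A} deg x / Σ_y deg y`. -/
def piSet (R : V → V → Prop) (C A : Finset V) : ℝ :=
  (∑ x ∈ A, (rDeg R C x : ℝ)) / (rTotal R C : ℝ)

/-- Stationary probability of a vertex: `π(x) = deg x / Σ_y deg y`. -/
def piVert (R : V → V → Prop) (C : Finset V) (x : V) : ℝ :=
  (rDeg R C x : ℝ) / (rTotal R C : ℝ)

/-- `Q(A,B)`: the number of edges from `A` to `B`, each with weight `1/Σ_y deg y`. -/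
def qBetween (R : V → V → Prop) (C A B : Finset V) : ℝ :=
  (∑ a ∈ A, ((B.filter fun b => R a b).card : ℝ)) / (rTotal R C : ℝ)

/-- Conductance `φ_A = Q(A, Aᶜ) / (π(A) π(Aᶜ))` of a set `A` in the graph `(C, R)`. -/
def conductance (R : V → V → Prop) (C A : Finset V) : ℝ :=
  qBetween R C A (C \ A) / (piSet R C A * piSet R C (C \ A))

/-- The Cheeger constant `φ = inf {φ_A : 0 < π(A) ≤ 1/2}`. -/
def cheeger (R : V → V → Prop) (C : Finset V) : ℝ :=
  sInf {r : ℝ | ∃ A : Finset V, A ⊆ C ∧ 0 < piSet R C A ∧ piSet R C A ≤ 1 / 2 ∧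
    r = conductance R C A}

/-- The size-restricted Cheeger constant `φ(x) = min {φ_A : 0 < π(A) ≤ x}`. -/
def cheegerAt (R : V → V → Prop) (C : Finset V) (x : ℝ) : ℝ :=
  sInf {r : ℝ | ∃ A : Finset V, A ⊆ C ∧ 0 < piSet R C A ∧ piSet R C A ≤ x ∧
    r = conductance R C A}

/-- A finite set `S` is connected for the relation `R` (within `S`). -/
def ConnectedOn (R : V → V → Prop) (S : Finset V) : Prop :=
  S.Nonempty ∧ ∀ v ∈ S, ∀ w ∈ S,
    Relation.ReflTransGen (fun a b => a ∈ S ∧ b ∈ S ∧ R a b) v w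

/-- The generator `Q` of continuous-time simple random walk on the graph `(C, R)`:
`Q_{xy} = 1/deg x` if `x ~ y`, `Q_{xx} = -1`, and `0` otherwise. -/
def walkGen (R : V → V → Prop) (C : Finset V) : Matrix {y // y ∈ C} {y // y ∈ C} ℝ :=
  Matrix.of fun x y =>
    if (x : V) = (y : V) then -1
    else if R (x : V) (y : V) then ((rDeg R C (x : V) : ℝ))⁻¹ else 0

end WalkDefs

/-- The heat kernel `π^t_x(y) = (exp (t Q))_{x y}` of the continuous-time walk. -/
def heatKernel {W : Type*} [Fintype W] [DecidableEq W] (Q : Matrix W W ℝ) (t : ℝ)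
    (x y : W) : ℝ :=
  ∑' k : ℕ, (t ^ k / (Nat.factorial k : ℝ)) * (Q ^ k) x y

/-- Total variation distance between two (densities of) measures on `W`. -/
def tvDist {W : Type*} [Fintype W] (f g : W → ℝ) : ℝ := (∑ x, |f x - g x|) / 2

/-- The total-variation mixing time
`τ₁ = inf {t : sup_{x,y} d_V(π^t_x, π^t_y) ≤ e⁻¹}`. -/
def mixTime {W : Type*} [Fintype W] [DecidableEq W] (Q : Matrix W W ℝ) : ℝ :=
  sInf {t : ℝ | 0 ≤ t ∧
    ∀ x y : W, tvDist (heatKernel Q t x) (heatKernel Q t y) ≤ Real.exp (-1)}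

/-- The second eigenvalue `λ₂ < 0` of the generator `Q`. -/
def lambda2 {W : Type*} [Fintype W] [DecidableEq W] (Q : Matrix W W ℝ) : ℝ :=
  sSup {l : ℝ | l < 0 ∧ Module.End.HasEigenvalue (Matrix.toLin' Q) l}

/-- The relaxation time `τ₂ = -1/λ₂`. -/
def relaxTime {W : Type*} [Fintype W] [DecidableEq W] (Q : Matrix W W ℝ) : ℝ :=
  -(lambda2 Q)⁻¹

/-- Mixing time of the simple random walk on a cluster `C` of bond percolation on `B_d(n)`. -/
def clusterMixTime (d n : ℕ) (ω : EdgeZ d → Bool) (C : Finset (Vert d)) : ℝ :=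
  mixTime (walkGen (openAdj d n ω) C)

/-- The event that the origin is connected to the boundary of the box `B_d(n)` by an
open path (inside the box). -/
def crossEvent (d n : ℕ) : Set (EdgeZ d → Bool) :=
  {ω | ∃ w ∈ boxFinset d n, (∃ i, |w i| = (n : ℤ)) ∧ openConn d n ω 0 w}

/-- `θ(p)`, the probability that the origin percolates: the decreasing limit of the
probabilities of crossing the box `B_d(n)`. -/
def theta (d : ℕ) (p : ℝ) : ℝ≥0∞ := ⨅ n : ℕ, bondMeasure d n p (crossEvent d n)

/-- The critical parameter `p_c(ℤ^d)` for Bernoulli bond percolation. -/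
def pc (d : ℕ) : ℝ := sSup {p : ℝ | 0 ≤ p ∧ p ≤ 1 ∧ theta d p = 0}

/-- `μ` is Bernoulli(p) bond percolation on all of `ℤ^d`: the cylinder events have the
right probabilities. -/
def IsBernoulliPerc (d : ℕ) (p : ℝ) (μ : Measure (EdgeZ d → Bool)) : Prop :=
  IsProbabilityMeasure μ ∧
    ∀ (s : Finset (EdgeZ d)) (f : EdgeZ d → Bool),
      μ {ω | ∀ e ∈ s, ω e = f e} =
        ∏ e ∈ s, (if f e then ENNReal.ofReal p else ENNReal.ofReal (1 - p))

/-- Adjacency by an open edge, anywhere in `ℤ^d`. -/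
def fullOpenAdj (d : ℕ) (ω : EdgeZ d → Bool) (v w : Vert d) : Prop :=
  ∃ e : EdgeZ d, ω e = true ∧ ((e.1 = v ∧ edgeSnd e = w) ∨ (e.1 = w ∧ edgeSnd e = v))

/-- The open cluster of `v` in the full lattice `ℤ^d`. -/
def fullCluster (d : ℕ) (ω : EdgeZ d → Bool) (v : Vert d) : Set (Vert d) :=
  {w | Relation.ReflTransGen (fullOpenAdj d ω) v w}

/-- Connectivity in `B_d(n)` avoiding the edges of `B`. -/
def avoidConn (d n : ℕ) (B : Finset (EdgeZ d)) : Vert d → Vert d → Prop :=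
  Relation.ReflTransGen fun a b => ∃ e ∈ boxEdgeFinset d n, e ∉ B ∧
    ((e.1 = a ∧ edgeSnd e = b) ∨ (e.1 = b ∧ edgeSnd e = a))

/-- `B` is a cutset of edges separating `v` from `w` in `B_d(n)`:
every path from `v` to `w` in `B_d(n)` uses an edge of `B`. -/
def IsCutset (d n : ℕ) (v w : Vert d) (B : Finset (EdgeZ d)) : Prop :=
  B ⊆ boxEdgeFinset d n ∧ ¬ avoidConn d n B v w

/-- A minimal cutset separating `v` from `w`. -/
def IsMinimalCutset (d n : ℕ) (v w : Vert d) (B : Finset (EdgeZ d)) : Prop :=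
  IsCutset d n v w B ∧ ∀ B' ⊂ B, ¬ IsCutset d n v w B'

/-- Adjacency of open sites of site percolation in the box. -/
def siteAdj (d n : ℕ) (η : Vert d → Bool) (a b : Vert d) : Prop :=
  a ∈ boxFinset d n ∧ b ∈ boxFinset d n ∧ η a = true ∧ η b = true ∧ latAdj a b

/-- The open cluster of `v` for site percolation on `B_d(n)`. -/
def siteCluster (d n : ℕ) (η : Vert d → Bool) (v : Vert d) : Finset (Vert d) :=
  (boxFinset d n).filter fun w => Relation.ReflTransGen (siteAdj d n η) v w

/-- Number of lattice edges of the box with both endpoints in `C`. -/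
def siteEdgeCount (d n : ℕ) (C : Finset (Vert d)) : ℕ :=
  ((boxEdgeFinset d n).filter fun e => e.1 ∈ C ∧ edgeSnd e ∈ C).card

def IsSiteCluster (d n : ℕ) (η : Vert d → Bool) (C : Finset (Vert d)) : Prop :=
  ∃ v ∈ boxFinset d n, η v = true ∧ C = siteCluster d n η v

def IsLargestSiteCluster (d n : ℕ) (η : Vert d → Bool) (C : Finset (Vert d)) : Prop :=
  IsSiteCluster d n η C ∧
    ∀ C', IsSiteCluster d n η C' → siteEdgeCount d n C' ≤ siteEdgeCount d n C

/-- The primal edge of `ℤ²` crossing a given edge of the dual lattice `ℤ²_* = ℤ² + (1/2,1/2)`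
(dual vertices are identified with `ℤ²` via `u ↦ u + (1/2,1/2)`). -/
def primalOfDual (f : EdgeZ 2) : EdgeZ 2 :=
  if f.2 = (0 : Fin 2) then (![f.1 0 + 1, f.1 1], 1) else (![f.1 0, f.1 1 + 1], 0)

/-- First-passage weight of the dual edge between the dual vertices `a` and `b`:
`1` if the primal edge crossing it is open, `0` if it is closed. -/
def dualStepWeight (ω : EdgeZ 2 → Bool) (a b : Vert 2) : ℕ :=
  if (∃ i : Fin 2, b = a + unitVec 2 i ∧ ω (primalOfDual (a, i)) = true) ∨
     (∃ i : Fin 2, a = b + unitVec 2 i ∧ ω (primalOfDual (b, i)) = true) then 1 else 0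

/-- Total first-passage cost of a dual lattice path, given as the list of its vertices. -/
def pathCost (ω : EdgeZ 2 → Bool) (l : List (Vert 2)) : ℕ :=
  ((l.zip l.tail).map fun q => dualStepWeight ω q.1 q.2).sum

/-- `l` is a lattice path from `x` to `y`. -/
def IsLatticePath (l : List (Vert 2)) (x y : Vert 2) : Prop :=
  l.Chain' latAdj ∧ l.head? = some x ∧ l.getLast? = some y

/-- First-passage percolation distance on the dual lattice:
`D(x,y) = min { Σᵢ X(eᵢ*) : e₁*,…,e_k* a dual path from x to y }`. -/
def fppDist (ω : EdgeZ 2 → Bool) (x y : Vert 2) : ℕ :=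
  sInf {m : ℕ | ∃ l : List (Vert 2), IsLatticePath l x y ∧ pathCost ω l = m}

end

noncomputable section Aux

open Finset

variable {d : ℕ}

lemma mem_boxFinset {n : ℕ} {x : Vert d} :
    x ∈ boxFinset d n ↔ ∀ i, -(n:ℤ) ≤ x i ∧ x i ≤ n := by
  simp [boxFinset, Fintype.mem_piFinset, Finset.mem_Icc]

lemma mem_boxEdgeFinset {n : ℕ} {e : EdgeZ d} :
    e ∈ boxEdgeFinset d n ↔ e.1 ∈ boxFinset d n ∧ edgeSnd e ∈ boxFinset d n := by
  simp [boxEdgeFinset, Finset.mem_filter, Finset.mem_product]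

lemma edgeSnd_mk (x : Vert d) (i : Fin d) : edgeSnd (x, i) = x + unitVec d i := rfl

lemma add_unitVec_apply (x : Vert d) (i j : Fin d) :
    (x + unitVec d i) j = x j + if j = i then 1 else 0 := rfl

lemma rtg_symm {α : Type*} {r : α → α → Prop} (hr : ∀ a b, r a b → r b a) {a b : α}
    (h : Relation.ReflTransGen r a b) : Relation.ReflTransGen r b a := by
  induction h with
  | refl => exact .refl
  | tail _ h₂ ih => exact Relation.ReflTransGen.head (hr _ _ h₂) ih

/-- A single step in the box avoiding the edges of `B`. -/
def avStep (d n : ℕ) (B : Finset (EdgeZ d)) (a b : Vert d) : Prop :=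
  ∃ e ∈ boxEdgeFinset d n, e ∉ B ∧ ((e.1 = a ∧ edgeSnd e = b) ∨ (e.1 = b ∧ edgeSnd e = a))

lemma avoidConn_eq (n : ℕ) (B : Finset (EdgeZ d)) :
    avoidConn d n B = Relation.ReflTransGen (avStep d n B) := rfl

lemma avStep_symm {n : ℕ} {B : Finset (EdgeZ d)} :
    ∀ a b : Vert d, avStep d n B a b → avStep d n B b a := by
  rintro a b ⟨e, he, heB, h | h⟩
  · exact ⟨e, he, heB, Or.inr h⟩
  · exact ⟨e, he, heB, Or.inl h⟩

lemma avoidConn_symm {n : ℕ} {B : Finset (EdgeZ d)} {a b : Vert d}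
    (h : avoidConn d n B a b) : avoidConn d n B b a :=
  rtg_symm avStep_symm h

lemma avoidConn_mono {n : ℕ} {B B' : Finset (EdgeZ d)} (hBB : B' ⊆ B) {a b : Vert d}
    (h : avoidConn d n B a b) : avoidConn d n B' a b := by
  induction h with
  | refl => exact .refl
  | tail _ h₂ ih =>
      obtain ⟨e, he, heB, hor⟩ := h₂
      exact ih.tail ⟨e, he, fun hc => heB (hBB hc), hor⟩

lemma box_conn {n : ℕ} (x z : Vert d) (hx : x ∈ boxFinset d n) (hz : z ∈ boxFinset d n) :
    avoidConn d n ∅ x z := by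
  generalize hk : (∑ i, (x i - z i).natAbs) = k
  induction k using Nat.strong_induction_on generalizing x with
  | _ k IH =>
    by_cases hxz : x = z
    · subst hxz; exact .refl
    · have hex : ∃ i, x i ≠ z i := by
        by_contra h; push_neg at h; exact hxz (funext h)
      obtain ⟨i, hi⟩ := hex
      have hxi := (mem_boxFinset.1 hx) i
      have hzi := (mem_boxFinset.1 hz) i
      rcases lt_or_gt_of_ne hi with hlt | hgt
      · -- step x → x + unitVec d i
        set x' : Vert d := x + unitVec d i with hx'
        have hx'j : ∀ j, x' j = x j + if j = i then 1 else 0 := fun j => rfl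
        have hx'box : x' ∈ boxFinset d n := by
          rw [mem_boxFinset]
          intro j
          have := (mem_boxFinset.1 hx) j
          rw [hx'j j]
          by_cases hji : j = i
          · subst hji; simp only [if_pos rfl]; omega
          · simp only [if_neg hji]; omega
        have hstep : avStep d n ∅ x x' := by
          refine ⟨(x, i), mem_boxEdgeFinset.2 ⟨hx, hx'box⟩, by simp, Or.inl ⟨rfl, rfl⟩⟩
        have hmeas : (∑ j, (x' j - z j).natAbs) < k := by
          rw [← hk]
          have hsplit : ∀ y : Vert d, (∑ j, (y j - z j).natAbs)
              = (y i - z i).natAbs + ∑ j ∈ Finset.univ.erase i, (y j - z j).natAbs := by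
            intro y
            exact (Finset.add_sum_erase _ (fun j => (y j - z j).natAbs) (Finset.mem_univ i)).symm
          rw [hsplit x', hsplit x]
          have hrest : ∑ j ∈ Finset.univ.erase i, (x' j - z j).natAbs
              = ∑ j ∈ Finset.univ.erase i, (x j - z j).natAbs := by
            refine Finset.sum_congr rfl fun j hj => ?_
            have hji : j ≠ i := (Finset.mem_erase.1 hj).1
            rw [hx'j j, if_neg hji]; omega
          rw [hrest, hx'j i, if_pos rfl]
          have : ((x i + 1) - z i).natAbs < (x i - z i).natAbs := by omega
          omega
        exact Relation.ReflTransGen.head hstep (IH _ hmeas x' hx'box rfl)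
      · -- step x → x - unitVec d i
        set x' : Vert d := x - unitVec d i with hx'
        have hx'j : ∀ j, x' j = x j - if j = i then 1 else 0 := fun j => rfl
        have hx'box : x' ∈ boxFinset d n := by
          rw [mem_boxFinset]
          intro j
          have := (mem_boxFinset.1 hx) j
          rw [hx'j j]
          by_cases hji : j = i
          · subst hji; simp only [if_pos rfl]; omega
          · simp only [if_neg hji]; omega
        have hsnd : edgeSnd (x', i) = x := by
          rw [edgeSnd_mk, hx']; abel
        have hstep : avStep d n ∅ x x' := by
          refine ⟨(x', i), mem_boxEdgeFinset.2 ⟨hx'box, ?_⟩, by simp, Or.inr ⟨rfl, hsnd⟩⟩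
          rw [hsnd]; exact hx
        have hmeas : (∑ j, (x' j - z j).natAbs) < k := by
          rw [← hk]
          have hsplit : ∀ y : Vert d, (∑ j, (y j - z j).natAbs)
              = (y i - z i).natAbs + ∑ j ∈ Finset.univ.erase i, (y j - z j).natAbs := by
            intro y
            exact (Finset.add_sum_erase _ (fun j => (y j - z j).natAbs) (Finset.mem_univ i)).symm
          rw [hsplit x', hsplit x]
          have hrest : ∑ j ∈ Finset.univ.erase i, (x' j - z j).natAbs
              = ∑ j ∈ Finset.univ.erase i, (x j - z j).natAbs := by
            refine Finset.sum_congr rfl fun j hj => ?_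
            have hji : j ≠ i := (Finset.mem_erase.1 hj).1
            rw [hx'j j, if_neg hji]; omega
          rw [hrest, hx'j i, if_pos rfl]
          have : ((x i - 1) - z i).natAbs < (x i - z i).natAbs := by omega
          omega
        exact Relation.ReflTransGen.head hstep (IH _ hmeas x' hx'box rfl)

end Aux

noncomputable section CutsetStruct

variable {d n : ℕ} {v w : Vert d} {B : Finset (EdgeZ d)}

lemma erase_path_split {e : EdgeZ d} {x z : Vert d}
    (h : avoidConn d n (B.erase e) x z) :
    avoidConn d n B x z ∨ (avoidConn d n B x e.1 ∨ avoidConn d n B x (edgeSnd e)) := by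
  induction h using Relation.ReflTransGen.head_induction_on with
  | refl => exact Or.inl .refl
  | @head a c hstep hrest ih =>
    obtain ⟨e', he', he'B, hor⟩ := hstep
    by_cases heq : e' = e
    · subst heq
      rcases hor with ⟨h1, _⟩ | ⟨_, h2⟩
      · exact Or.inr (Or.inl (h1 ▸ Relation.ReflTransGen.refl))
      · exact Or.inr (Or.inr (h2 ▸ Relation.ReflTransGen.refl))
    · have he'B2 : e' ∉ B := fun hc => he'B (Finset.mem_erase.2 ⟨heq, hc⟩)
      have hstepB : avStep d n B a c := ⟨e', he', he'B2, hor⟩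
      rcases ih with h | h | h
      · exact Or.inl (Relation.ReflTransGen.head hstepB h)
      · exact Or.inr (Or.inl (Relation.ReflTransGen.head hstepB h))
      · exact Or.inr (Or.inr (Relation.ReflTransGen.head hstepB h))

lemma edgeSnd_ne (e : EdgeZ d) : e.1 ≠ edgeSnd e := by
  intro hc
  have := congrFun hc e.2
  simp [edgeSnd, unitVec] at this

lemma cutset_disjoint (hmin : IsMinimalCutset d n v w B) {x : Vert d}
    (h1 : avoidConn d n B v x) (h2 : avoidConn d n B w x) : False :=
  hmin.1.2 (h1.trans (avoidConn_symm h2))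

lemma cut_edge_endpoints (hmin : IsMinimalCutset d n v w B) {e : EdgeZ d} (he : e ∈ B) :
    (avoidConn d n B v e.1 ∧ avoidConn d n B w (edgeSnd e)) ∨
    (avoidConn d n B v (edgeSnd e) ∧ avoidConn d n B w e.1) := by
  obtain ⟨⟨hsub, hcut⟩, hminim⟩ := hmin
  have herase : avoidConn d n (B.erase e) v w := by
    have h := hminim (B.erase e) (Finset.erase_ssubset he)
    by_contra hc
    exact h ⟨fun x hx => hsub (Finset.mem_of_mem_erase hx), hc⟩
  have hv := erase_path_split herase
  have hw := erase_path_split (avoidConn_symm herase)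
  rcases hv with hvw | hv
  · exact absurd hvw hcut
  rcases hw with hwv | hw
  · exact absurd (avoidConn_symm hwv) hcut
  have hdisj : ∀ x, avoidConn d n B v x → avoidConn d n B w x → False := fun x h1 h2 =>
    hcut (h1.trans (avoidConn_symm h2))
  rcases hv with hv1 | hv2
  · rcases hw with hw1 | hw2
    · exact absurd hw1 fun h => hdisj _ hv1 h
    · exact Or.inl ⟨hv1, hw2⟩
  · rcases hw with hw1 | hw2
    · exact Or.inr ⟨hv2, hw1⟩
    · exact absurd hw2 fun h => hdisj _ hv2 h

lemma notmem_B_same {e : EdgeZ d} (he : e ∈ boxEdgeFinset d n) (heB : e ∉ B) {x : Vert d} :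
    avoidConn d n B x e.1 ↔ avoidConn d n B x (edgeSnd e) := by
  constructor
  · exact fun h => h.tail ⟨e, he, heB, Or.inl ⟨rfl, rfl⟩⟩
  · exact fun h => h.tail ⟨e, he, heB, Or.inr ⟨rfl, rfl⟩⟩

lemma mem_B_diff (hmin : IsMinimalCutset d n v w B) {e : EdgeZ d} (he : e ∈ B) :
    avoidConn d n B v e.1 ↔ ¬ avoidConn d n B v (edgeSnd e) := by
  rcases cut_edge_endpoints hmin he with ⟨h1, h2⟩ | ⟨h1, h2⟩
  · exact ⟨fun _ hc => cutset_disjoint hmin hc h2, fun _ => h1⟩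
  · exact ⟨fun hc => absurd h2 (fun h => cutset_disjoint hmin hc h),
      fun hc => absurd h1 (fun h => hc h)⟩

lemma mem_S_or_T (hmin : IsMinimalCutset d n v w B) (hv : v ∈ boxFinset d n) :
    ∀ z, z ∈ boxFinset d n → avoidConn d n B v z ∨ avoidConn d n B w z := by
  intro z hz
  have hpath : avoidConn d n ∅ v z := box_conn v z hv hz
  clear hz
  induction hpath with
  | refl => exact Or.inl .refl
  | tail hsteps hstep ih =>
    obtain ⟨e, he, _, hor⟩ := hstep
    by_cases heB : e ∈ B
    · rcases hor with ⟨_, hb⟩ | ⟨ha, _⟩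
      · rcases cut_edge_endpoints hmin heB with ⟨_, h2⟩ | ⟨h1, _⟩
        · exact Or.inr (hb ▸ h2)
        · exact Or.inl (hb ▸ h1)
      · rcases cut_edge_endpoints hmin heB with ⟨h1, _⟩ | ⟨_, h2⟩
        · exact Or.inl (ha ▸ h1)
        · exact Or.inr (ha ▸ h2)
    · rcases ih with h | h
      · exact Or.inl (h.tail ⟨e, he, heB, hor⟩)
      · exact Or.inr (h.tail ⟨e, he, heB, hor⟩)

end CutsetStruct

noncomputable section Potential

open Finset

variable {d : ℕ} (n : ℕ)

/-- Helper identities in `ZMod 2`. -/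
lemma z2_self (a : ZMod 2) : a + a = 0 := by revert a; decide
lemma z2_sq {a b c e : ZMod 2} (h : a + b + c + e = 0) : b + c = a + e := by revert a b c e; decide
lemma z2_tel (a b c : ZMod 2) : a + b + (b + c) = a + c := by revert a b c; decide
lemma z2_cancel (a b : ZMod 2) : a + (a + b) = b := by revert a b; decide

lemma sum_Ico_succ_top_int {M : Type*} [AddCommMonoid M] {a b : ℤ} (hab : a ≤ b) (f : ℤ → M) :
    (∑ k ∈ Finset.Ico a (b + 1), f k) = (∑ k ∈ Finset.Ico a b, f k) + f b := by
  have : Finset.Ico a (b + 1) = insert b (Finset.Ico a b) := by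
    ext k
    simp only [Finset.mem_Ico, Finset.mem_insert]
    omega
  rw [this, Finset.sum_insert (by simp [Finset.mem_Ico])]
  exact add_comm _ _

def stitch (x : Vert d) (j : Fin d) (t : ℤ) : Vert d :=
  fun s => if s < j then x s else if s = j then t else -(n:ℤ)

def Ustep (x : Vert d) (k : ℕ) : Vert d := fun s => if (s:ℕ) < k then x s else -(n:ℤ)

def SqInBox (c : Vert d) (i j : Fin d) : Prop :=
  c ∈ boxFinset d n ∧ c + unitVec d i ∈ boxFinset d n ∧ c + unitVec d j ∈ boxFinset d n ∧
    c + unitVec d i + unitVec d j ∈ boxFinset d n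

variable (χ : EdgeZ d → ZMod 2)

def segSum (x : Vert d) (j : Fin d) : ZMod 2 :=
  ∑ t ∈ Finset.Ico (-(n:ℤ)) (x j), χ (stitch n x j t, j)

def pot (x : Vert d) : ZMod 2 := ∑ j, segSum n χ x j

lemma add_unit_coord_ne (x : Vert d) {i j : Fin d} (h : j ≠ i) : (x + unitVec d i) j = x j := by
  simp [unitVec, h]

lemma add_unit_coord_self (x : Vert d) (i : Fin d) : (x + unitVec d i) i = x i + 1 := by
  simp [unitVec]

lemma stitch_add_unit_high {x : Vert d} {i j : Fin d} (hij : i < j) (t : ℤ) :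
    stitch n (x + unitVec d i) j t = stitch n x j t + unitVec d i := by
  funext s
  simp only [stitch, Pi.add_apply, unitVec]
  by_cases h1 : s < j
  · simp [h1]
  · by_cases h2 : s = j
    · subst h2
      simp [h1, hij.ne']
    · have hsi : s ≠ i := by
        intro hc; subst hc; exact h1 hij
      simp [h1, h2, hsi]

lemma stitch_add_unit_low {x : Vert d} {i j : Fin d} (hji : j ≤ i) (t : ℤ) :
    stitch n (x + unitVec d i) j t = stitch n x j t := by
  funext s; simp only [stitch, Pi.add_apply, unitVec]
  by_cases h1 : s < j
  · have hsi : s ≠ i := (h1.trans_le hji).ne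
    simp [h1, hsi]
  · simp [h1]

lemma stitch_succ {x : Vert d} {j : Fin d} (t : ℤ) :
    stitch n x j (t + 1) = stitch n x j t + unitVec d j := by
  funext s; simp only [stitch, Pi.add_apply, unitVec]
  by_cases h1 : s < j
  · simp [h1, h1.ne]
  · by_cases h2 : s = j
    · simp [h1, h2]
    · simp [h1, h2]

lemma stitch_top (x : Vert d) (j : Fin d) : stitch n x j (x j) = Ustep n x ((j:ℕ)+1) := by
  funext s; simp only [stitch, Ustep]
  by_cases h1 : s < j
  · have h1' : (s:ℕ) < (j:ℕ)+1 := by have := Fin.lt_def.1 h1; omega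
    simp [h1, h1']
  · by_cases h2 : s = j
    · subst h2; simp [h1]
    · have hgt : ¬ (s:ℕ) < (j:ℕ)+1 := by
        have h1' : ¬ (s:ℕ) < (j:ℕ) := by rwa [Fin.lt_def] at h1
        have hne : (s:ℕ) ≠ (j:ℕ) := fun hc => h2 (Fin.ext hc)
        omega
      simp [h1, h2, hgt]

lemma stitch_bot (x : Vert d) (j : Fin d) : stitch n x j (-(n:ℤ)) = Ustep n x j := by
  funext s; simp only [stitch, Ustep]
  by_cases h1 : s < j
  · simp [h1, Fin.lt_def.1 h1]
  · by_cases h2 : s = j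
    · subst h2; simp [h1, lt_irrefl]
    · have h1' : ¬ (s:ℕ) < (j:ℕ) := by rwa [Fin.lt_def] at h1
      simp [h1, h2, h1']

lemma Ustep_last (x : Vert d) : Ustep n x d = x := funext fun s => by simp [Ustep, s.isLt]

lemma stitch_mem_box {x : Vert d} (hx : x ∈ boxFinset d n) {j : Fin d} {t : ℤ}
    (ht1 : -(n:ℤ) ≤ t) (ht2 : t ≤ n) : stitch n x j t ∈ boxFinset d n := by
  rw [mem_boxFinset]
  intro s
  have hxs := mem_boxFinset.1 hx s
  have hn : (0:ℤ) ≤ n := Int.ofNat_nonneg n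
  simp only [stitch]
  by_cases h1 : s < j
  · simp only [h1, if_true] <;> omega
  · by_cases h2 : s = j
    · simp only [h1, h2, if_false, if_true] <;> constructor <;> omega
    · simp only [h1, h2, if_false] <;> constructor <;> omega

/-- The key telescoping over a stack of unit squares. -/
lemma stack_lemma
    (hsq : ∀ c (i j : Fin d), i ≠ j → SqInBox n c i j →
      χ (c, i) + χ (c, j) + χ (c + unitVec d i, j) + χ (c + unitVec d j, i) = 0)
    {x : Vert d} {i j : Fin d} (hij : i < j) (hbox : ((x, i) : EdgeZ d) ∈ boxEdgeFinset d n) :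
    ∀ b : ℤ, -(n:ℤ) ≤ b → b ≤ x j →
      (∑ t ∈ Finset.Ico (-(n:ℤ)) b,
        (χ (stitch n x j t, j) + χ (stitch n x j t + unitVec d i, j)))
      = χ (Ustep n x j, i) + χ (stitch n x j b, i) := by
  have hx : x ∈ boxFinset d n := (mem_boxEdgeFinset.1 hbox).1
  have hxi : x + unitVec d i ∈ boxFinset d n := (mem_boxEdgeFinset.1 hbox).2
  refine fun b hb => Int.le_induction
    (motive := fun b _ => b ≤ x j →
      (∑ t ∈ Finset.Ico (-(n:ℤ)) b,
        (χ (stitch n x j t, j) + χ (stitch n x j t + unitVec d i, j)))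
      = χ (Ustep n x j, i) + χ (stitch n x j b, i)) ?_ ?_ b hb
  · intro _
    rw [Finset.Ico_self, Finset.sum_empty, stitch_bot]
    exact (z2_self _).symm
  · intro b hb ih hble
    have hble' : b ≤ x j := by omega
    have hxj : x j ≤ n := (mem_boxFinset.1 hx j).2
    rw [sum_Ico_succ_top_int hb, ih hble']
    have hsqb : SqInBox n (stitch n x j b) i j := by
      have h1 : stitch n x j b ∈ boxFinset d n := stitch_mem_box n hx hb (by omega)
      have h2 : stitch n x j b + unitVec d i ∈ boxFinset d n := by
        rw [mem_boxFinset]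
        intro s
        have hs1 := mem_boxFinset.1 h1 s
        have hs2 := mem_boxFinset.1 hxi s
        have hs3 := mem_boxFinset.1 hx s
        by_cases hsi : s = i
        · subst hsi
          rw [add_unit_coord_self]
          rw [add_unit_coord_self] at hs2
          have : stitch n x j b s = x s := by
            simp only [stitch]
            have : s < j := hij
            simp [this]
          omega
        · rw [add_unit_coord_ne _ hsi]; exact hs1
      have h3 : stitch n x j b + unitVec d j ∈ boxFinset d n := by
        rw [← stitch_succ]
        exact stitch_mem_box n hx (by omega) (by omega)
      have h4 : stitch n x j b + unitVec d i + unitVec d j ∈ boxFinset d n := by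
        rw [mem_boxFinset]
        intro s
        have hs2 := mem_boxFinset.1 h2 s
        have hs3 := mem_boxFinset.1 h3 s
        by_cases hsj : s = j
        · rw [hsj, add_unit_coord_self]
          rw [hsj, add_unit_coord_self] at hs3
          have : (stitch n x j b + unitVec d i) j = stitch n x j b j :=
            add_unit_coord_ne _ hij.ne'
          omega
        · rw [add_unit_coord_ne _ hsj]; exact hs2
      exact ⟨h1, h2, h3, h4⟩
    have hkey := z2_sq (hsq (stitch n x j b) i j hij.ne hsqb)
    rw [hkey, ← stitch_succ]
    exact z2_tel _ _ _

lemma tele_nat (h : ℕ → ZMod 2) (a : ℕ) :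
    ∀ b : ℕ, a ≤ b → (∑ k ∈ Finset.Ico a b, (h k + h (k+1))) = h a + h b := by
  intro b hab
  induction b, hab using Nat.le_induction with
  | base => rw [Finset.Ico_self, Finset.sum_empty]; exact (z2_self _).symm
  | succ b hab ih =>
    rw [Finset.sum_Ico_succ_top hab, ih, z2_tel]

/-- The discrete gradient of the potential is `χ`, on edges of the box. -/
theorem pot_edge
    (hsq : ∀ c (i j : Fin d), i ≠ j → SqInBox n c i j →
      χ (c, i) + χ (c, j) + χ (c + unitVec d i, j) + χ (c + unitVec d j, i) = 0)
    {x : Vert d} {i : Fin d} (hbox : ((x, i) : EdgeZ d) ∈ boxEdgeFinset d n) :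
    pot n χ (x + unitVec d i) + pot n χ x = χ (x, i) := by
  have hx : x ∈ boxFinset d n := (mem_boxEdgeFinset.1 hbox).1
  have hxn : ∀ s, -(n:ℤ) ≤ x s ∧ x s ≤ n := mem_boxFinset.1 hx
  set y : Vert d := x + unitVec d i with hy
  set f : Fin d → ZMod 2 := fun j => segSum n χ y j + segSum n χ x j with hf
  have hpot : pot n χ y + pot n χ x = ∑ j, f j := by
    rw [pot, pot, ← Finset.sum_add_distrib]
  rw [hpot]
  set h : ℕ → ZMod 2 := fun k => χ (Ustep n x k, i) with hh
  have hlow : ∀ j : Fin d, j < i → f j = 0 := by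
    intro j hj
    have hcoord : y j = x j := add_unit_coord_ne x hj.ne
    have : segSum n χ y j = segSum n χ x j := by
      rw [segSum, segSum, hcoord]
      refine Finset.sum_congr rfl fun t _ => ?_
      rw [hy, stitch_add_unit_low n hj.le]
    rw [hf]; dsimp only; rw [this]; exact z2_self _
  have hmid : f i = h ((i:ℕ)+1) := by
    have hcoord : y i = x i + 1 := add_unit_coord_self x i
    have hseg : segSum n χ y i = segSum n χ x i + χ (Ustep n x ((i:ℕ)+1), i) := by
      rw [segSum, segSum, hcoord,
        sum_Ico_succ_top_int (show -(n:ℤ) ≤ x i by have := (hxn i).1; omega)]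
      congr 1
      · refine Finset.sum_congr rfl fun t _ => ?_
        rw [hy, stitch_add_unit_low n (le_refl i)]
      · rw [hy, stitch_add_unit_low n (le_refl i), stitch_top]
    rw [hf]; dsimp only; rw [hseg, hh]
    dsimp only
    rw [add_comm (segSum n χ x i), add_assoc, z2_self, add_zero]
  have hhigh : ∀ j : Fin d, i < j → f j = h (j:ℕ) + h ((j:ℕ)+1) := by
    intro j hj
    have hcoord : y j = x j := add_unit_coord_ne x hj.ne'
    have hstk := stack_lemma n χ hsq hj hbox (x j) (hxn j).1 (le_refl _)
    have hseg : segSum n χ y j + segSum n χ x j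
        = ∑ t ∈ Finset.Ico (-(n:ℤ)) (x j),
            (χ (stitch n x j t, j) + χ (stitch n x j t + unitVec d i, j)) := by
      rw [segSum, segSum, hcoord, ← Finset.sum_add_distrib]
      refine Finset.sum_congr rfl fun t _ => ?_
      rw [hy, stitch_add_unit_high n hj]
      exact add_comm _ _
    rw [hf]; dsimp only
    rw [hseg, hstk, stitch_top, hh]
  -- now sum up
  set F : ℕ → ZMod 2 := fun k => if hk : k < d then f ⟨k, hk⟩ else 0 with hF
  have hFj : ∀ j : Fin d, F (j:ℕ) = f j := by
    intro j
    rw [hF]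
    simp only [j.isLt, dif_pos]
  have hFin : (∑ j, f j) = ∑ k ∈ Finset.range d, F k := by
    rw [← Fin.sum_univ_eq_sum_range]
    exact Finset.sum_congr rfl fun j _ => (hFj j).symm
  have hid : (i:ℕ) < d := i.isLt
  have hsplit : ∑ k ∈ Finset.range d, F k
      = ((∑ k ∈ Finset.Ico 0 (i:ℕ), F k) + F (i:ℕ)) + ∑ k ∈ Finset.Ico ((i:ℕ)+1) d, F k := by
    rw [Finset.range_eq_Ico, ← Finset.sum_Ico_consecutive _ (Nat.zero_le ((i:ℕ)+1)) hid,
      Finset.sum_Ico_succ_top (Nat.zero_le (i:ℕ))]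
  have hzero : (∑ k ∈ Finset.Ico 0 (i:ℕ), F k) = 0 := by
    refine Finset.sum_eq_zero fun k hk => ?_
    have hki : k < (i:ℕ) := (Finset.mem_Ico.1 hk).2
    have hkd : k < d := hki.trans hid
    rw [hF]
    simp only [hkd, dif_pos]
    exact hlow ⟨k, hkd⟩ (by rw [Fin.lt_def]; exact hki)
  have hhi : (∑ k ∈ Finset.Ico ((i:ℕ)+1) d, F k) = h ((i:ℕ)+1) + h d := by
    rw [← tele_nat h ((i:ℕ)+1) d hid]
    refine Finset.sum_congr rfl fun k hk => ?_
    have hk1 : (i:ℕ) + 1 ≤ k := (Finset.mem_Ico.1 hk).1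
    have hkd : k < d := (Finset.mem_Ico.1 hk).2
    rw [hF]
    simp only [hkd, dif_pos]
    exact hhigh ⟨k, hkd⟩ (by rw [Fin.lt_def]; dsimp only; omega)
  have hFi : F (i:ℕ) = h ((i:ℕ)+1) := by rw [hFj i]; exact hmid
  rw [hFin, hsplit, hzero, hFi, hhi, zero_add, z2_cancel]
  rw [hh]
  dsimp only
  rw [Ustep_last]

end Potential

noncomputable section Hconn

variable {d : ℕ}

lemma z2_eq (a b : ZMod 2) (h : a + b = 0) : a = b := by revert a b; decide

/-- `e` is one of the four edges of the unit square at `c` spanned by directions `i, j`. -/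
def onSq (c : Vert d) (i j : Fin d) (e : EdgeZ d) : Prop :=
  e = (c, i) ∨ e = (c, j) ∨ e = (c + unitVec d i, j) ∨ e = (c + unitVec d j, i)

/-- Two edges lying on a common unit square. -/
def HadjE (e f : EdgeZ d) : Prop :=
  ∃ (c : Vert d) (i j : Fin d), i ≠ j ∧ onSq c i j e ∧ onSq c i j f

theorem mincut_Hconn {n : ℕ} {v w : Vert d} {B : Finset (EdgeZ d)}
    (hv : v ∈ boxFinset d n) (hmin : IsMinimalCutset d n v w B)
    {e₀ : EdgeZ d} (he₀ : e₀ ∈ B) :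
    ∀ f ∈ B, Relation.ReflTransGen (fun a b => a ∈ B ∧ b ∈ B ∧ HadjE a b) e₀ f := by
  by_contra hcon
  push_neg at hcon
  obtain ⟨f₀, hf₀B, hf₀⟩ := hcon
  set rel : EdgeZ d → EdgeZ d → Prop := fun a b => a ∈ B ∧ b ∈ B ∧ HadjE a b with hrel
  set χ₁ : EdgeZ d → ZMod 2 :=
    fun e => if e ∈ B ∧ Relation.ReflTransGen rel e₀ e then 1 else 0 with hχ
  have hsubB : B ⊆ boxEdgeFinset d n := hmin.1.1
  have hcrit : ∀ e : EdgeZ d, e ∈ boxEdgeFinset d n →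
      (if e ∈ B then (1 : ZMod 2) else 0)
        = (if avoidConn d n B v e.1 then (1:ZMod 2) else 0)
          + (if avoidConn d n B v (edgeSnd e) then (1:ZMod 2) else 0) := by
    intro e he
    by_cases heB : e ∈ B
    · rw [if_pos heB]
      have hd := mem_B_diff hmin heB
      by_cases h1 : avoidConn d n B v e.1
      · rw [if_pos h1, if_neg (hd.1 h1)]; decide
      · have h2 : avoidConn d n B v (edgeSnd e) := by
          by_contra h2; exact h1 (hd.2 h2)
        rw [if_neg h1, if_pos h2]; decide
    · rw [if_neg heB]
      have hs := notmem_B_same (x := v) he heB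
      by_cases h1 : avoidConn d n B v e.1
      · rw [if_pos h1, if_pos (hs.1 h1)]; decide
      · rw [if_neg h1, if_neg (fun h => h1 (hs.2 h))]; decide
  have hsqEdges : ∀ (c : Vert d) (i j : Fin d), SqInBox n c i j →
      ((c,i) ∈ boxEdgeFinset d n ∧ (c,j) ∈ boxEdgeFinset d n ∧
       (c + unitVec d i, j) ∈ boxEdgeFinset d n ∧
       (c + unitVec d j, i) ∈ boxEdgeFinset d n) := by
    rintro c i j ⟨m1, m2, m3, m4⟩
    refine ⟨mem_boxEdgeFinset.2 ⟨m1, m2⟩, mem_boxEdgeFinset.2 ⟨m1, m3⟩,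
      mem_boxEdgeFinset.2 ⟨m2, m4⟩, mem_boxEdgeFinset.2 ⟨m3, ?_⟩⟩
    show c + unitVec d j + unitVec d i ∈ _
    rw [add_right_comm]
    exact m4
  have hBsq : ∀ (c : Vert d) (i j : Fin d), i ≠ j → SqInBox n c i j →
      ((if (c,i) ∈ B then (1:ZMod 2) else 0) + (if (c,j) ∈ B then (1:ZMod 2) else 0)
      + (if (c + unitVec d i, j) ∈ B then (1:ZMod 2) else 0)
      + (if (c + unitVec d j, i) ∈ B then (1:ZMod 2) else 0)) = 0 := by
    intro c i j hij hsq
    obtain ⟨m1, m2, m3, m4⟩ := hsqEdges c i j hsq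
    rw [hcrit _ m1, hcrit _ m2, hcrit _ m3, hcrit _ m4]
    have e1 : edgeSnd ((c, i) : EdgeZ d) = c + unitVec d i := rfl
    have e2 : edgeSnd ((c, j) : EdgeZ d) = c + unitVec d j := rfl
    have e3 : edgeSnd ((c + unitVec d i, j) : EdgeZ d) = c + unitVec d i + unitVec d j := rfl
    have e4 : edgeSnd ((c + unitVec d j, i) : EdgeZ d) = c + unitVec d i + unitVec d j := by
      rw [edgeSnd_mk, add_right_comm]
    rw [e1, e2, e3, e4]
    have z8 : ∀ a b c' e : ZMod 2, ((a + b) + (a + c')) + (b + e) + (c' + e) = 0 := by decide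
    exact z8 _ _ _ _
  have hsq₁ : ∀ (c : Vert d) (i j : Fin d), i ≠ j → SqInBox n c i j →
      χ₁ (c,i) + χ₁ (c,j) + χ₁ (c + unitVec d i, j) + χ₁ (c + unitVec d j, i) = 0 := by
    intro c i j hij hsq
    by_cases hex : ∃ g : EdgeZ d, onSq c i j g ∧ g ∈ B ∧ Relation.ReflTransGen rel e₀ g
    · obtain ⟨g₀, hg₀sq, hg₀B, hg₀r⟩ := hex
      have hval : ∀ g' : EdgeZ d, onSq c i j g' → χ₁ g' = (if g' ∈ B then (1:ZMod 2) else 0) := by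
        intro g' hg'
        by_cases hg'B : g' ∈ B
        · have hr : Relation.ReflTransGen rel e₀ g' :=
            hg₀r.tail ⟨hg₀B, hg'B, ⟨c, i, j, hij, hg₀sq, hg'⟩⟩
          rw [hχ]
          simp only []
          rw [if_pos ⟨hg'B, hr⟩, if_pos hg'B]
        · rw [hχ]
          simp only []
          rw [if_neg (fun hc => hg'B hc.1), if_neg hg'B]
      rw [hval _ (Or.inl rfl), hval _ (Or.inr (Or.inl rfl)),
        hval _ (Or.inr (Or.inr (Or.inl rfl))), hval _ (Or.inr (Or.inr (Or.inr rfl)))]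
      exact hBsq c i j hij hsq
    · push_neg at hex
      have hval : ∀ g' : EdgeZ d, onSq c i j g' → χ₁ g' = 0 := by
        intro g' hg'
        rw [hχ]
        simp only []
        exact if_neg (fun hc => hex g' hg' hc.1 hc.2)
      rw [hval _ (Or.inl rfl), hval _ (Or.inr (Or.inl rfl)),
        hval _ (Or.inr (Or.inr (Or.inl rfl))), hval _ (Or.inr (Or.inr (Or.inr rfl)))]
      decide
  have hedge : ∀ e : EdgeZ d, e ∈ boxEdgeFinset d n →
      pot n χ₁ (edgeSnd e) + pot n χ₁ e.1 = χ₁ e := by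
    intro e he
    exact pot_edge n χ₁ hsq₁ (x := e.1) (i := e.2) he
  have hconst : ∀ x z : Vert d, avoidConn d n B x z → pot n χ₁ x = pot n χ₁ z := by
    intro x z h
    induction h with
    | refl => rfl
    | tail hsteps hstep ih =>
      obtain ⟨e, he, heB, hor⟩ := hstep
      have h0 : χ₁ e = 0 := by
        rw [hχ]; exact if_neg (fun hc => heB hc.1)
      have heq : pot n χ₁ e.1 = pot n χ₁ (edgeSnd e) := by
        have h' := hedge e he
        rw [h0] at h'
        exact (z2_eq _ _ h').symm
      rcases hor with ⟨h1, h2⟩ | ⟨h1, h2⟩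
      · rw [ih, ← h1, ← h2]; exact heq
      · rw [ih, ← h2, ← h1]; exact heq.symm
  have h1 : χ₁ e₀ = 1 := by
    rw [hχ]; exact if_pos ⟨he₀, Relation.ReflTransGen.refl⟩
  have hvw : pot n χ₁ v + pot n χ₁ w = 1 := by
    have he := hedge e₀ (hsubB he₀)
    rw [h1] at he
    rcases cut_edge_endpoints hmin he₀ with ⟨hS, hT⟩ | ⟨hS, hT⟩
    · rw [hconst v e₀.1 hS, hconst w (edgeSnd e₀) hT, add_comm]
      exact he
    · rw [hconst v (edgeSnd e₀) hS, hconst w e₀.1 hT]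
      exact he
  have h0f : χ₁ f₀ = 0 := by
    rw [hχ]; exact if_neg (fun hc => hf₀ hc.2)
  have hveqw : pot n χ₁ v = pot n χ₁ w := by
    have he := hedge f₀ (hsubB hf₀B)
    rw [h0f] at he
    have heq : pot n χ₁ f₀.1 = pot n χ₁ (edgeSnd f₀) := (z2_eq _ _ he).symm
    rcases cut_edge_endpoints hmin hf₀B with ⟨hS, hT⟩ | ⟨hS, hT⟩
    · rw [hconst v f₀.1 hS, hconst w (edgeSnd f₀) hT]; exact heq
    · rw [hconst v (edgeSnd f₀) hS, hconst w f₀.1 hT]; exact heq.symm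
  rw [hveqw, z2_self] at hvw
  exact absurd hvw (by decide)

end Hconn

noncomputable section Walks

open Finset

variable {α : Type*} [DecidableEq α]

/-- BFS layers. -/
def layers (R : α → α → Prop) (A : Finset α) (a₀ : α) : ℕ → Finset α
  | 0 => {a₀}
  | (k+1) => layers R A a₀ k ∪ A.filter (fun x => ∃ y ∈ layers R A a₀ k, R y x)

lemma layers_subset {R : α → α → Prop} {A : Finset α} {a₀ : α} (ha₀ : a₀ ∈ A) :
    ∀ k, layers R A a₀ k ⊆ A := by
  intro k
  induction k with
  | zero => intro x hx; rw [layers, Finset.mem_singleton] at hx; rwa [hx]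
  | succ k ih =>
    intro x hx
    rcases Finset.mem_union.1 hx with h | h
    · exact ih h
    · exact (Finset.mem_filter.1 h).1

lemma reach_mem_layers {R : α → α → Prop} {A : Finset α} {a₀ : α} {x : α}
    (h : Relation.ReflTransGen (fun u v => u ∈ A ∧ v ∈ A ∧ R u v) a₀ x) :
    ∃ k, x ∈ layers R A a₀ k := by
  induction h with
  | refl => exact ⟨0, Finset.mem_singleton_self a₀⟩
  | tail hsteps hstep ih =>
    obtain ⟨k, hk⟩ := ih
    exact ⟨k+1, Finset.mem_union.2 (Or.inr (Finset.mem_filter.2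
      ⟨hstep.2.1, ⟨_, hk, hstep.2.2⟩⟩))⟩

lemma chain'_insert_detour {R : α → α → Prop} {l₁ l₂ : List α} {c b : α}
    (h : (l₁ ++ c :: l₂).Chain' R) (h1 : R c b) (h2 : R b c) :
    (l₁ ++ c :: b :: c :: l₂).Chain' R := by
  unfold List.Chain' at h ⊢
  rw [List.isChain_append] at h ⊢
  obtain ⟨hc1, hc2, hlink⟩ := h
  refine ⟨hc1, ?_, ?_⟩
  · rw [List.isChain_cons_cons, List.isChain_cons_cons]
    exact ⟨h1, h2, hc2⟩
  · intro x hx y hy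
    simp only [List.head?_cons, Option.mem_def, Option.some.injEq] at hy
    exact hy ▸ hlink x hx c (by simp)

theorem exists_cover_walk (R : α → α → Prop) (hsym : ∀ a b, R a b → R b a) :
    ∀ (m : ℕ) (A : Finset α) (a₀ : α), a₀ ∈ A →
    (∀ x ∈ A, Relation.ReflTransGen (fun u v => u ∈ A ∧ v ∈ A ∧ R u v) a₀ x) →
    A.card = m →
    ∃ l : List α, l.Chain' R ∧ l.head? = some a₀ ∧ l.toFinset = A ∧ l.length + 1 ≤ 2 * A.card := by
  intro m
  induction m using Nat.strong_induction_on with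
  | _ m IH =>
    intro A a₀ ha₀ hconn hcard
    by_cases hA1 : A.card ≤ 1
    · have hAeq : A = {a₀} := by
        have h1 := Finset.card_le_one.1 hA1
        ext x
        simp only [Finset.mem_singleton]
        exact ⟨fun hx => h1 x hx a₀ ha₀, fun hx => hx ▸ ha₀⟩
      refine ⟨[a₀], List.isChain_singleton a₀, rfl, ?_, ?_⟩
      · rw [hAeq]; simp
      · rw [hAeq]; simp
    · push_neg at hA1
      classical
      set L := layers R A a₀ with hL
      set dist : α → ℕ := fun x => if h : ∃ k, x ∈ L k then Nat.find h else 0 with hdist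
      have hdist_spec : ∀ x ∈ A, x ∈ L (dist x) := by
        intro x hx
        have hex : ∃ k, x ∈ L k := reach_mem_layers (hconn x hx)
        rw [hdist]; dsimp only; rw [dif_pos hex]
        exact Nat.find_spec hex
      have hdist_min : ∀ (x : α) (k : ℕ), x ∈ L k → dist x ≤ k := by
        intro x k hk
        have hex : ∃ k, x ∈ L k := ⟨k, hk⟩
        rw [hdist]; dsimp only; rw [dif_pos hex]
        exact Nat.find_le hk
      have hdista₀ : dist a₀ = 0 :=
        Nat.le_zero.1 (hdist_min a₀ 0 (Finset.mem_singleton_self a₀))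
      obtain ⟨b, hbA, hbmax⟩ := A.exists_max_image dist ⟨a₀, ha₀⟩
      have hb0 : dist b ≠ 0 := by
        intro h0
        have hall : ∀ x ∈ A, x = a₀ := by
          intro x hx
          have hx0 : dist x = 0 := Nat.le_zero.1 (h0 ▸ hbmax x hx)
          have := hdist_spec x hx
          rw [hx0] at this
          simpa [hL, layers] using this
        have : A.card ≤ 1 := Finset.card_le_one.2
          (fun p hp q hq => by rw [hall p hp, hall q hq])
        omega
      obtain ⟨k, hk⟩ : ∃ k, dist b = k + 1 := ⟨dist b - 1, by omega⟩
      have hbL : b ∈ L (k+1) := hk ▸ hdist_spec b hbA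
      have hbnotL : b ∉ L k := fun hc => by have := hdist_min b k hc; omega
      have hbfil : b ∈ A.filter (fun x => ∃ y ∈ L k, R y x) := by
        rcases Finset.mem_union.1 hbL with h | h
        · exact absurd h hbnotL
        · exact h
      obtain ⟨-, c, hcL, hcb⟩ := Finset.mem_filter.1 hbfil
      have hcA : c ∈ A := layers_subset ha₀ k hcL
      have hdistc : dist c ≤ k := hdist_min c k hcL
      have hcb' : c ≠ b := fun hcc => by rw [hcc] at hdistc; omega
      have hba₀ : b ≠ a₀ := fun h => by rw [h, hdista₀] at hk; omega
      set A' := A.erase b with hA'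
      have ha₀' : a₀ ∈ A' := Finset.mem_erase.2 ⟨Ne.symm hba₀, ha₀⟩
      have hconn' : ∀ x ∈ A', Relation.ReflTransGen
          (fun u v => u ∈ A' ∧ v ∈ A' ∧ R u v) a₀ x := by
        have main : ∀ (kk : ℕ) (x : α), x ∈ A → x ≠ b → dist x ≤ kk →
            Relation.ReflTransGen (fun u v => u ∈ A' ∧ v ∈ A' ∧ R u v) a₀ x := by
          intro kk
          induction kk with
          | zero =>
            intro x hx hxb hd
            have hx0 : x ∈ L 0 := by
              have := hdist_spec x hx
              rwa [Nat.le_zero.1 hd] at this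
            have : x = a₀ := by simpa [hL, layers] using hx0
            rw [this]
          | succ kk ih =>
            intro x hx hxb hd
            by_cases hle : dist x ≤ kk
            · exact ih x hx hxb hle
            · have hdx : dist x = kk + 1 := by omega
              have hxL : x ∈ L (kk+1) := hdx ▸ hdist_spec x hx
              have hxnotL : x ∉ L kk := fun hc => by have := hdist_min x kk hc; omega
              have hxfil : x ∈ A.filter (fun z => ∃ y ∈ L kk, R y z) := by
                rcases Finset.mem_union.1 hxL with h | h
                · exact absurd h hxnotL
                · exact h
              obtain ⟨-, y, hyL, hyx⟩ := Finset.mem_filter.1 hxfil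
              have hyA : y ∈ A := layers_subset ha₀ kk hyL
              have hdisty : dist y ≤ kk := hdist_min y kk hyL
              have hyb : y ≠ b := by
                intro hyy
                rw [hyy] at hdisty
                have := hbmax x hx
                omega
              exact (ih y hyA hyb hdisty).tail
                ⟨Finset.mem_erase.2 ⟨hyb, hyA⟩, Finset.mem_erase.2 ⟨hxb, hx⟩, hyx⟩
        intro x hx
        obtain ⟨hxb, hxA⟩ := Finset.mem_erase.1 hx
        exact main (dist x) x hxA hxb le_rfl
      have hcardA' : A'.card = m - 1 := by
        rw [hA', Finset.card_erase_of_mem hbA, hcard]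
      obtain ⟨l', hch, hhd, htf, hlen⟩ :=
        IH (m-1) (by omega) A' a₀ ha₀' hconn' hcardA'
      have hcl : c ∈ l' := by
        rw [← List.mem_toFinset, htf]
        exact Finset.mem_erase.2 ⟨hcb', hcA⟩
      obtain ⟨l₁, l₂, hsplit⟩ := List.append_of_mem hcl
      rw [hsplit] at hch hhd htf hlen
      refine ⟨l₁ ++ c :: b :: c :: l₂, chain'_insert_detour hch hcb (hsym _ _ hcb), ?_, ?_, ?_⟩
      · cases l₁ with
        | nil => simpa using hhd
        | cons h t => simpa using hhd
      · ext x
        have hxmem : x ∈ A ↔ x = b ∨ x ∈ A' := by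
          constructor
          · intro h
            by_cases hxb : x = b
            · exact Or.inl hxb
            · exact Or.inr (Finset.mem_erase.2 ⟨hxb, h⟩)
          · rintro (rfl | h)
            · exact hbA
            · exact (Finset.mem_erase.1 h).2
        rw [List.mem_toFinset, hxmem, ← htf, List.mem_toFinset]
        simp only [List.mem_append, List.mem_cons]
        tauto
      · have hl1 : (l₁ ++ c :: b :: c :: l₂).length = (l₁ ++ c :: l₂).length + 2 := by
          simp only [List.length_append, List.length_cons]
          omega
        have hcards : A.card = A'.card + 1 := by
          rw [hA', Finset.card_erase_of_mem hbA]
          omega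
        rw [hl1, hcards]
        rw [hcardA'] at hlen ⊢
        omega

end Walks

noncomputable section Count

open Finset

variable {α : Type*} [DecidableEq α] [Inhabited α]

def walksF (N : α → Finset α) (a₀ : α) : ℕ → Finset (List α)
  | 0 => {[a₀]}
  | (k+1) => walksF N a₀ k ∪ (walksF N a₀ k).biUnion fun l => (N l.headI).image (· :: l)

lemma walksF_card (N : α → Finset α) (a₀ : α) (Δ : ℕ) (hN : ∀ a, (N a).card ≤ Δ) :
    ∀ k, (walksF N a₀ k).card ≤ (Δ+1)^k := by
  intro k
  induction k with
  | zero => simp [walksF]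
  | succ k ih =>
    have h1 : ((walksF N a₀ k).biUnion fun l => (N l.headI).image (· :: l)).card
        ≤ (walksF N a₀ k).card * Δ := by
      calc ((walksF N a₀ k).biUnion fun l => (N l.headI).image (· :: l)).card
          ≤ ∑ l ∈ walksF N a₀ k, ((N l.headI).image (· :: l)).card :=
            Finset.card_biUnion_le
        _ ≤ ∑ _l ∈ walksF N a₀ k, Δ := Finset.sum_le_sum fun l _ =>
            le_trans (Finset.card_image_le) (hN _)
        _ = (walksF N a₀ k).card * Δ := by rw [Finset.sum_const, smul_eq_mul]
    calc (walksF N a₀ (k+1)).card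
        ≤ (walksF N a₀ k).card + ((walksF N a₀ k).biUnion fun l => (N l.headI).image (· :: l)).card :=
          Finset.card_union_le _ _
      _ ≤ (Δ+1)^k + (Δ+1)^k * Δ := Nat.add_le_add ih (le_trans h1 (Nat.mul_le_mul_right _ ih))
      _ = (Δ+1)^(k+1) := by ring
  
lemma walksF_mono (N : α → Finset α) (a₀ : α) : ∀ {k k' : ℕ}, k ≤ k' →
    walksF N a₀ k ⊆ walksF N a₀ k' := by
  intro k k' hkk
  induction k' with
  | zero => have : k = 0 := by omega
            rw [this]
  | succ k' ih =>
    by_cases h : k = k' + 1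
    · rw [h]
    · exact (ih (by omega)).trans Finset.subset_union_left

lemma mem_walksF (N : α → Finset α) (a₀ : α) :
    ∀ (k : ℕ) (l : List α), l.Chain' (fun a b => a ∈ N b) →
    l.getLast? = some a₀ → l.length ≤ k + 1 → l ∈ walksF N a₀ k := by
  intro k
  induction k with
  | zero =>
    intro l hch hlast hlen
    match l with
    | [] => simp at hlast
    | [x] =>
      simp only [List.getLast?_singleton, Option.some.injEq] at hlast
      rw [hlast, walksF]
      exact Finset.mem_singleton_self _
    | x :: y :: t => simp at hlen
  | succ k ih =>
    intro l hch hlast hlen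
    match l with
    | [] => simp at hlast
    | [x] =>
      have : [x] ∈ walksF N a₀ 0 := by
        simp only [List.getLast?_singleton, Option.some.injEq] at hlast
        rw [hlast, walksF]
        exact Finset.mem_singleton_self _
      exact walksF_mono N a₀ (Nat.zero_le _) this
    | x :: y :: t =>
      have hxy : x ∈ N y := (List.isChain_cons_cons.1 hch).1
      have hch' : (y :: t).Chain' (fun a b => a ∈ N b) := (List.isChain_cons_cons.1 hch).2
      have hlast' : (y :: t).getLast? = some a₀ := by
        rwa [List.getLast?_cons_cons] at hlast
      have hmem : (y :: t) ∈ walksF N a₀ k := by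
        apply ih _ hch' hlast'
        simp only [List.length_cons] at hlen ⊢
        omega
      rw [walksF]
      refine Finset.mem_union.2 (Or.inr (Finset.mem_biUnion.2 ⟨y :: t, hmem, ?_⟩))
      exact Finset.mem_image.2 ⟨x, hxy, rfl⟩

/-- Counting connected subsets. -/
theorem card_connFinsets_le (N : α → Finset α) (R : α → α → Prop)
    (hRN : ∀ a b, R a b → a ∈ N b) (hsym : ∀ a b, R a b → R b a)
    (U : Finset α) (a₀ : α) (m : ℕ) (hm : 1 ≤ m) (Δ : ℕ) (hN : ∀ a, (N a).card ≤ Δ) :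
    (U.powerset.filter fun A => a₀ ∈ A ∧ A.card = m ∧
        ∀ x ∈ A, Relation.ReflTransGen (fun u v => u ∈ A ∧ v ∈ A ∧ R u v) a₀ x).card
      ≤ (Δ+1)^(2*m) := by
  classical
  set fs := U.powerset.filter fun A => a₀ ∈ A ∧ A.card = m ∧
      ∀ x ∈ A, Relation.ReflTransGen (fun u v => u ∈ A ∧ v ∈ A ∧ R u v) a₀ x with hfs
  have hwalk : ∀ A : Finset α, ∃ l : List α, A ∈ fs →
      (l.toFinset = A ∧ l ∈ walksF N a₀ (2*m - 2)) := by
    intro A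
    by_cases hA : A ∈ fs
    · rw [hfs, Finset.mem_filter] at hA
      obtain ⟨-, ha₀A, hcard, hconn⟩ := hA
      obtain ⟨l, hch, hhd, htf, hlen⟩ := exists_cover_walk R hsym m A a₀ ha₀A hconn hcard
      refine ⟨l.reverse, fun _ => ⟨by rw [List.toFinset_reverse]; exact htf, ?_⟩⟩
      apply mem_walksF
      · have : l.reverse.Chain' (flip R) := List.isChain_reverse.2 hch
        exact List.IsChain.imp (fun a b hab => hRN _ _ (hsym _ _ hab)) this
      · rw [List.getLast?_reverse]; exact hhd
      · rw [List.length_reverse]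
        rw [hcard] at hlen
        omega
    · exact ⟨[], fun h => absurd h hA⟩
  choose enc henc using hwalk
  have hinj : Set.InjOn enc fs := by
    intro A hA A' hA' heq
    have h1 := (henc A (by simpa using hA)).1
    have h2 := (henc A' (by simpa using hA')).1
    rw [← h1, ← h2, heq]
  have hmaps : ∀ A ∈ fs, enc A ∈ walksF N a₀ (2*m - 2) :=
    fun A hA => (henc A hA).2
  calc fs.card ≤ (walksF N a₀ (2*m-2)).card := Finset.card_le_card_of_injOn enc hmaps hinj
    _ ≤ (Δ+1)^(2*m-2) := walksF_card N a₀ Δ hN _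
    _ ≤ (Δ+1)^(2*m) := Nat.pow_le_pow_right (by omega) (by omega)

end Count

noncomputable section BoxCount

open Finset

variable {d : ℕ}

def nbhd (e : EdgeZ d) : Finset (EdgeZ d) :=
  (Fintype.piFinset fun t => Finset.Icc (e.1 t - 1) (e.1 t + 1)) ×ˢ (Finset.univ : Finset (Fin d))

lemma nbhd_card (e : EdgeZ d) : (nbhd e).card = 3^d * d := by
  rw [nbhd, Finset.card_product, Fintype.card_piFinset]
  have h3 : ∀ t : Fin d, (Finset.Icc (e.1 t - 1) (e.1 t + 1)).card = 3 := by
    intro t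
    rw [Int.card_Icc]
    omega
  rw [Finset.prod_congr rfl fun t _ => h3 t]
  simp [Finset.card_univ]

lemma onSq_coord {c : Vert d} {i j : Fin d} {e : EdgeZ d} (h : onSq c i j e) :
    ∀ t, e.1 t = c t ∨ e.1 t = c t + 1 := by
  intro t
  have haux : ∀ k : Fin d, (c + unitVec d k) t = c t ∨ (c + unitVec d k) t = c t + 1 := by
    intro k
    by_cases htk : t = k
    · subst htk; exact Or.inr (add_unit_coord_self c t)
    · exact Or.inl (add_unit_coord_ne c htk)
  rcases h with rfl | rfl | rfl | rfl
  · exact Or.inl rfl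
  · exact Or.inl rfl
  · exact haux i
  · exact haux j

lemma hadj_mem_nbhd {e f : EdgeZ d} (h : HadjE e f) : e ∈ nbhd f := by
  obtain ⟨c, i, j, hij, he, hf⟩ := h
  rw [nbhd, Finset.mem_product]
  refine ⟨?_, Finset.mem_univ _⟩
  rw [Fintype.mem_piFinset]
  intro t
  rw [Finset.mem_Icc]
  rcases onSq_coord he t with h1 | h1 <;> rcases onSq_coord hf t with h2 | h2 <;> omega

lemma hadjE_symm {e f : EdgeZ d} (h : HadjE e f) : HadjE f e := by
  obtain ⟨c, i, j, hij, he, hf⟩ := h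
  exact ⟨c, i, j, hij, hf, he⟩

lemma card_boxFinset (d n : ℕ) : (boxFinset d n).card = (2*n+1)^d := by
  rw [boxFinset, Fintype.card_piFinset]
  have h : ∀ _i : Fin d, (Finset.Icc (-(n:ℤ)) (n:ℤ)).card = 2*n+1 := by
    intro i
    rw [Int.card_Icc]
    omega
  rw [Finset.prod_congr rfl fun t _ => h t, Finset.prod_const, Finset.card_univ, Fintype.card_fin]

lemma card_boxEdgeFinset_le (d n : ℕ) : (boxEdgeFinset d n).card ≤ (2*n+1)^d * d := by
  calc (boxEdgeFinset d n).card ≤ ((boxFinset d n) ×ˢ (Finset.univ : Finset (Fin d))).card :=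
        Finset.card_le_card (Finset.filter_subset _ _)
    _ = (2*n+1)^d * d := by
        rw [Finset.card_product, card_boxFinset, Finset.card_univ, Fintype.card_fin]

/-- The family of "cutset-shaped" edge sets: subsets of the box edges of size `≥ M` that
are connected in the square-adjacency graph. -/
def cutShaped (d n M : ℕ) : Finset (Finset (EdgeZ d)) :=
  (boxEdgeFinset d n).powerset.filter fun A => M ≤ A.card ∧ A.Nonempty ∧
    ∃ e₀ ∈ A, ∀ f ∈ A, Relation.ReflTransGen (fun a b => a ∈ A ∧ b ∈ A ∧ HadjE a b) e₀ f

lemma card_cutShaped_size (hd : 1 ≤ d) (n M m : ℕ) (hm : 1 ≤ m) :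
    (((cutShaped d n M)).filter fun A => A.card = m).card
      ≤ (boxEdgeFinset d n).card * (3^d * d + 1)^(2*m) := by
  classical
  haveI : Inhabited (EdgeZ d) := ⟨(fun _ => 0, ⟨0, hd⟩)⟩
  have hsub : ((cutShaped d n M).filter fun A => A.card = m) ⊆
      (boxEdgeFinset d n).biUnion fun e₀ =>
        (boxEdgeFinset d n).powerset.filter fun A => e₀ ∈ A ∧ A.card = m ∧
          ∀ f ∈ A, Relation.ReflTransGen (fun a b => a ∈ A ∧ b ∈ A ∧ HadjE a b) e₀ f := by
    intro A hA
    rw [Finset.mem_filter, cutShaped, Finset.mem_filter] at hA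
    obtain ⟨⟨hpow, _, _, e₀, he₀A, hconn⟩, hcm⟩ := hA
    refine Finset.mem_biUnion.2 ⟨e₀, Finset.mem_powerset.1 hpow he₀A, ?_⟩
    exact Finset.mem_filter.2 ⟨hpow, he₀A, hcm, hconn⟩
  calc (((cutShaped d n M)).filter fun A => A.card = m).card
      ≤ _ := Finset.card_le_card hsub
    _ ≤ ∑ _e₀ ∈ boxEdgeFinset d n, (3^d * d + 1)^(2*m) := by
        refine le_trans Finset.card_biUnion_le (Finset.sum_le_sum fun e₀ _ => ?_)
        exact card_connFinsets_le nbhd HadjE (fun a b h => hadj_mem_nbhd h)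
          (fun a b h => hadjE_symm h) (boxEdgeFinset d n) e₀ m hm (3^d * d)
          (fun a => le_of_eq (nbhd_card a))
    _ = (boxEdgeFinset d n).card * (3^d * d + 1)^(2*m) := by
        rw [Finset.sum_const, smul_eq_mul]

end BoxCount

noncomputable section Prob

open MeasureTheory Finset

lemma meas_bondMap (d n : ℕ) : Measurable
    (fun (ω : {e // e ∈ boxEdgeFinset d n} → Bool) (e : EdgeZ d) =>
      if h : e ∈ boxEdgeFinset d n then ω ⟨e, h⟩ else false) := by
  apply measurable_pi_lambda
  intro e
  by_cases h : e ∈ boxEdgeFinset d n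
  · simp only [dif_pos h]
    exact measurable_pi_apply _
  · simp only [dif_neg h]
    exact measurable_const

instance bondProb (d n : ℕ) (p : ℝ) : IsProbabilityMeasure (bondMeasure d n p) := by
  rw [bondMeasure]
  exact Measure.isProbabilityMeasure_map (meas_bondMap d n).aemeasurable

lemma bern_false {p : ℝ} (hp0 : 0 ≤ p) (hp1 : p ≤ 1) :
    bern p {false} = ENNReal.ofReal (1-p) := by
  rw [bern, PMF.toMeasure_apply_singleton _ _ (measurableSet_singleton _)]
  have happ : (PMF.bernoulli (min (Real.toNNReal p) 1) (min_le_right _ _)) false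
      = 1 - ((min (Real.toNNReal p) 1 : NNReal) : ℝ≥0∞) := by rw [PMF.bernoulli_apply]; rfl
  have hmin : min (Real.toNNReal p) 1 = Real.toNNReal p :=
    min_eq_left (Real.toNNReal_le_one.2 hp1)
  rw [happ, hmin, ← ENNReal.ofReal_one]
  exact (ENNReal.ofReal_sub 1 hp0).symm

lemma bond_cyl (d n : ℕ) {p : ℝ} (hp0 : 0 ≤ p) (hp1 : p ≤ 1) {K : Finset (EdgeZ d)}
    (hK : K ⊆ boxEdgeFinset d n) :
    bondMeasure d n p {ω | ∀ e ∈ K, ω e = false} = (ENNReal.ofReal (1-p))^K.card := by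
  classical
  have hmeasSet : MeasurableSet {ω : EdgeZ d → Bool | ∀ e ∈ K, ω e = false} := by
    have hset : {ω : EdgeZ d → Bool | ∀ e ∈ K, ω e = false}
        = ⋂ e ∈ (K : Set (EdgeZ d)), (fun ω : EdgeZ d → Bool => ω e) ⁻¹' {false} := by
      ext ω
      simp only [Set.mem_setOf_eq, Set.mem_iInter, Set.mem_preimage, Set.mem_singleton_iff,
        Finset.mem_coe]
    rw [hset]
    exact MeasurableSet.biInter K.countable_toSet
      (fun e _ => (measurable_pi_apply e) (measurableSet_singleton false))
  rw [bondMeasure, Measure.map_apply (meas_bondMap d n) hmeasSet]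
  have hpre : (fun (ω : {e // e ∈ boxEdgeFinset d n} → Bool) (e : EdgeZ d) =>
        if h : e ∈ boxEdgeFinset d n then ω ⟨e, h⟩ else false) ⁻¹'
      {ω | ∀ e ∈ K, ω e = false}
      = Set.univ.pi (fun i : {e // e ∈ boxEdgeFinset d n} =>
          if (i : EdgeZ d) ∈ K then ({false} : Set Bool) else Set.univ) := by
    ext η
    simp only [Set.mem_preimage, Set.mem_setOf_eq, Set.mem_pi, Set.mem_univ, forall_true_left]
    constructor
    · intro h i
      by_cases hiK : (i : EdgeZ d) ∈ K
      · rw [if_pos hiK]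
        have h2 := h i.1 hiK
        rw [dif_pos i.2] at h2
        simpa using h2
      · rw [if_neg hiK]; trivial
    · intro h e heK
      have hbe : e ∈ boxEdgeFinset d n := hK heK
      rw [dif_pos hbe]
      have h2 := h ⟨e, hbe⟩
      rw [if_pos heK] at h2
      simpa using h2
  rw [hpre, Measure.pi_pi]
  have hval : ∀ i : {e // e ∈ boxEdgeFinset d n},
      bern p (if (i : EdgeZ d) ∈ K then ({false} : Set Bool) else Set.univ)
      = if (i : EdgeZ d) ∈ K then ENNReal.ofReal (1-p) else 1 := by
    intro i
    by_cases hiK : (i : EdgeZ d) ∈ K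
    · rw [if_pos hiK, if_pos hiK, bern_false hp0 hp1]
    · rw [if_neg hiK, if_neg hiK]
      exact measure_univ
  rw [Finset.prod_congr rfl fun i _ => hval i, Finset.prod_ite
    (fun _ => ENNReal.ofReal (1-p)) (fun _ => (1:ℝ≥0∞)), Finset.prod_const,
    Finset.prod_const_one, mul_one]
  congr 1
  apply Finset.card_bij (fun (a : {e // e ∈ boxEdgeFinset d n}) _ => (a : EdgeZ d))
  · intro a ha; exact (Finset.mem_filter.1 ha).2
  · intro a1 h1 a2 h2 heq; exact Subtype.ext heq
  · intro b hb; exact ⟨⟨b, hK hb⟩, Finset.mem_filter.2 ⟨Finset.mem_univ _, hb⟩, rfl⟩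

/-- The bad event for an edge set `A`: fewer than half of its edges are open. -/
def badA (A : Finset (EdgeZ d)) : Set (EdgeZ d → Bool) :=
  {ω | 2 * (A.filter fun e => ω e = true).card < A.card}

lemma badA_bound (d n : ℕ) {p : ℝ} (hp0 : 0 ≤ p) (hp1 : p ≤ 1) {A : Finset (EdgeZ d)}
    (hA : A ⊆ boxEdgeFinset d n) :
    bondMeasure d n p (badA A)
      ≤ (2:ℝ≥0∞)^A.card * (ENNReal.ofReal (1-p))^(A.card / 2) := by
  classical
  have hsub : badA A ⊆
      ⋃ K ∈ (A.powersetCard (A.card / 2) : Finset (Finset (EdgeZ d))),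
        {ω : EdgeZ d → Bool | ∀ e ∈ K, ω e = false} := by
    intro ω hω
    rw [badA, Set.mem_setOf_eq] at hω
    have hpart : (A.filter fun e => ω e = true).card
        + (A.filter fun e => ω e = false).card = A.card := by
      have hco : (A.filter fun e => ω e = false) = (A.filter fun e => ¬ (ω e = true)) := by
        apply Finset.filter_congr
        intro e _
        simp [Bool.not_eq_true]
      rw [hco]
      exact Finset.card_filter_add_card_filter_not (p := fun e => ω e = true)
    have hclosed : A.card / 2 ≤ (A.filter fun e => ω e = false).card := by omega
    obtain ⟨K, hKsub, hKcard⟩ := Finset.exists_subset_card_eq hclosed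
    refine Set.mem_biUnion (Finset.mem_powersetCard.2
      ⟨hKsub.trans (Finset.filter_subset _ _), hKcard⟩) ?_
    intro e heK
    exact (Finset.mem_filter.1 (hKsub heK)).2
  have hchoose : ((A.powersetCard (A.card / 2)).card : ℝ≥0∞) ≤ (2:ℝ≥0∞)^A.card := by
    rw [Finset.card_powersetCard]
    have h1 : A.card.choose (A.card / 2) ≤ 2^A.card := by
      calc A.card.choose (A.card / 2)
          ≤ ∑ i ∈ Finset.range (A.card + 1), A.card.choose i :=
            Finset.single_le_sum (fun i _ => Nat.zero_le _)
              (Finset.mem_range.2 (by omega))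
        _ = 2^A.card := Nat.sum_range_choose A.card
    calc ((A.card.choose (A.card / 2) : ℕ) : ℝ≥0∞) ≤ ((2^A.card : ℕ) : ℝ≥0∞) :=
          Nat.cast_le.2 h1
      _ = (2:ℝ≥0∞)^A.card := by push_cast; ring
  calc bondMeasure d n p (badA A)
      ≤ ∑ K ∈ A.powersetCard (A.card / 2), bondMeasure d n p {ω | ∀ e ∈ K, ω e = false} :=
        le_trans (measure_mono hsub) (measure_biUnion_finset_le _ _)
    _ = ∑ _K ∈ A.powersetCard (A.card / 2), (ENNReal.ofReal (1-p))^(A.card / 2) := by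
        refine Finset.sum_congr rfl fun K hK => ?_
        obtain ⟨hKA, hKc⟩ := Finset.mem_powersetCard.1 hK
        rw [bond_cyl d n hp0 hp1 (hKA.trans hA), hKc]
    _ = ((A.powersetCard (A.card / 2)).card : ℝ≥0∞) * (ENNReal.ofReal (1-p))^(A.card / 2) := by
        rw [Finset.sum_const, nsmul_eq_mul]
    _ ≤ (2:ℝ≥0∞)^A.card * (ENNReal.ofReal (1-p))^(A.card / 2) :=
        mul_le_mul_left hchoose _

end Prob

noncomputable section Master

open MeasureTheory Finset

lemma theta_sum_bound {θ : ℝ} (hθ0 : 0 ≤ θ) (hθ : θ ≤ 1/2) (M E : ℕ) (hM : 1 ≤ M) :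
    (∑ m ∈ Finset.Icc M E, θ^(m-1)) ≤ θ^(M-1) * 2 := by
  have himg : Finset.Icc M E ⊆ (Finset.range (E+1)).image (fun k => k + M) := by
    intro m hm
    rw [Finset.mem_Icc] at hm
    rw [Finset.mem_image]
    exact ⟨m - M, Finset.mem_range.2 (by omega), by omega⟩
  have hpos : ∀ m : ℕ, (0:ℝ) ≤ θ^(m-1) := fun m => pow_nonneg hθ0 _
  calc (∑ m ∈ Finset.Icc M E, θ^(m-1))
      ≤ ∑ m ∈ (Finset.range (E+1)).image (fun k => k + M), θ^(m-1) :=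
        Finset.sum_le_sum_of_subset_of_nonneg himg (fun m _ _ => hpos m)
    _ = ∑ k ∈ Finset.range (E+1), θ^(k + M - 1) :=
        Finset.sum_image (f := fun m => θ^(m-1)) (g := fun k => k + M)
          (fun a _ b _ (h : a + M = b + M) => by omega)
    _ ≤ ∑ k ∈ Finset.range (E+1), θ^(M-1) * (1/2)^k := by
        refine Finset.sum_le_sum fun k _ => ?_
        have h1 : θ^(k + M - 1) = θ^(M-1) * θ^k := by
          rw [← pow_add]
          congr 1
          omega
        rw [h1]
        exact mul_le_mul_of_nonneg_left (pow_le_pow_left₀ hθ0 hθ k) (pow_nonneg hθ0 _)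
    _ = θ^(M-1) * ∑ k ∈ Finset.range (E+1), (1/2:ℝ)^k := by rw [Finset.mul_sum]
    _ ≤ θ^(M-1) * 2 := mul_le_mul_of_nonneg_left (sum_geometric_two_le _) (pow_nonneg hθ0 _)

lemma master_bound (d n : ℕ) (hd : 1 ≤ d) {p : ℝ} (hp0 : 0 ≤ p) (hp1 : p ≤ 1) (M : ℕ) (hM : 1 ≤ M)
    (hθhalf : ((3^d*d+1 : ℕ):ℝ)^2 * 2 * Real.sqrt (1-p) ≤ 1/2) :
    bondMeasure d n p (⋃ A ∈ (cutShaped d n M : Finset (Finset (EdgeZ d))), badA A)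
      ≤ ENNReal.ofReal ((((boxEdgeFinset d n).card : ℝ)) * ((((3^d*d+1 : ℕ):ℝ)^2 * 2) *
          ((((3^d*d+1 : ℕ):ℝ)^2 * 2 * Real.sqrt (1-p))^(M-1) * 2))) := by
  classical
  have hq0 : (0:ℝ) ≤ 1 - p := by linarith
  set s : ℝ := Real.sqrt (1-p) with hsdef
  have hs0 : 0 ≤ s := Real.sqrt_nonneg _
  have hs1 : s ≤ 1 := Real.sqrt_le_one.2 (by linarith)
  set D : ℝ := ((3^d*d+1 : ℕ):ℝ) with hD
  have hD0 : 0 ≤ D := Nat.cast_nonneg _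
  set K₀ : ℝ := D^2 * 2 with hK₀
  have hK₀0 : 0 ≤ K₀ := by positivity
  set θ : ℝ := K₀ * s with hθdef
  have hθ0 : 0 ≤ θ := mul_nonneg hK₀0 hs0
  set E : ℕ := (boxEdgeFinset d n).card with hE
  have hper : ∀ A ∈ cutShaped d n M,
      bondMeasure d n p (badA A) ≤ ENNReal.ofReal (2^A.card * s^(A.card - 1)) := by
    intro A hA
    rw [cutShaped, Finset.mem_filter] at hA
    obtain ⟨hpow, hMc, -, -⟩ := hA
    have hsubE : A ⊆ boxEdgeFinset d n := Finset.mem_powerset.1 hpow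
    calc bondMeasure d n p (badA A)
        ≤ (2:ℝ≥0∞)^A.card * (ENNReal.ofReal (1-p))^(A.card / 2) :=
          badA_bound d n hp0 hp1 hsubE
      _ = ENNReal.ofReal (2^A.card * (1-p)^(A.card / 2)) := by
          rw [ENNReal.ofReal_mul (by positivity), ENNReal.ofReal_pow (by norm_num : (0:ℝ) ≤ 2),
            ENNReal.ofReal_pow hq0, ENNReal.ofReal_ofNat]
      _ ≤ ENNReal.ofReal (2^A.card * s^(A.card - 1)) := by
          apply ENNReal.ofReal_le_ofReal
          apply mul_le_mul_of_nonneg_left _ (by positivity)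
          have h2 : (1-p)^(A.card/2) = s^(2*(A.card/2)) := by
            rw [pow_mul, Real.sq_sqrt hq0]
          rw [h2]
          exact pow_le_pow_of_le_one hs0 hs1 (by omega)
  have hdisj : (↑(Finset.Icc M E) : Set ℕ).PairwiseDisjoint
      (fun m => (cutShaped d n M).filter fun A => A.card = m) := by
    intro m1 _ m2 _ hne
    refine Finset.disjoint_left.2 fun A hA1 hA2 => ?_
    have h1 := (Finset.mem_filter.1 hA1).2
    have h2 := (Finset.mem_filter.1 hA2).2
    exact hne (h1 ▸ h2 ▸ rfl)
  have hpartition : (cutShaped d n M)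
      = (Finset.Icc M E).biUnion (fun m => (cutShaped d n M).filter fun A => A.card = m) := by
    ext A
    simp only [Finset.mem_biUnion, Finset.mem_Icc, Finset.mem_filter]
    constructor
    · intro hA
      have hA' := hA
      rw [cutShaped, Finset.mem_filter] at hA'
      obtain ⟨hpow, hMc, -, -⟩ := hA'
      have h2 : A.card ≤ E := Finset.card_le_card (Finset.mem_powerset.1 hpow)
      exact ⟨A.card, ⟨hMc, h2⟩, hA, rfl⟩
    · rintro ⟨m, -, hA, -⟩
      exact hA
  calc bondMeasure d n p (⋃ A ∈ (cutShaped d n M : Finset (Finset (EdgeZ d))), badA A)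
      ≤ ∑ A ∈ cutShaped d n M, bondMeasure d n p (badA A) :=
        measure_biUnion_finset_le _ _
    _ ≤ ∑ A ∈ cutShaped d n M, ENNReal.ofReal (2^A.card * s^(A.card - 1)) :=
        Finset.sum_le_sum hper
    _ = ∑ m ∈ Finset.Icc M E, ∑ A ∈ (cutShaped d n M).filter (fun A => A.card = m),
          ENNReal.ofReal (2^A.card * s^(A.card - 1)) := by
        conv_lhs => rw [hpartition]
        exact Finset.sum_biUnion hdisj
    _ = ∑ m ∈ Finset.Icc M E, (((cutShaped d n M).filter (fun A => A.card = m)).card : ℝ≥0∞)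
          * ENNReal.ofReal (2^m * s^(m - 1)) := by
        refine Finset.sum_congr rfl fun m _ => ?_
        rw [← nsmul_eq_mul, ← Finset.sum_const]
        refine Finset.sum_congr rfl fun A hA => ?_
        rw [(Finset.mem_filter.1 hA).2]
    _ ≤ ∑ m ∈ Finset.Icc M E,
          ENNReal.ofReal (((E * (3^d*d+1)^(2*m) : ℕ):ℝ) * (2^m * s^(m - 1))) := by
        refine Finset.sum_le_sum fun m hm => ?_
        have hcnt := card_cutShaped_size hd n M m
          (by rw [Finset.mem_Icc] at hm; omega)
        calc (((cutShaped d n M).filter (fun A => A.card = m)).card : ℝ≥0∞)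
              * ENNReal.ofReal (2^m * s^(m - 1))
            ≤ ((E * (3^d*d+1)^(2*m) : ℕ) : ℝ≥0∞) * ENNReal.ofReal (2^m * s^(m - 1)) := by
              apply mul_le_mul_left
              exact_mod_cast Nat.cast_le.2 hcnt
          _ = ENNReal.ofReal (((E * (3^d*d+1)^(2*m) : ℕ):ℝ)) * ENNReal.ofReal (2^m * s^(m-1)) := by
              rw [ENNReal.ofReal_natCast]
          _ = _ := (ENNReal.ofReal_mul (Nat.cast_nonneg _)).symm
    _ = ENNReal.ofReal (∑ m ∈ Finset.Icc M E,
          ((E * (3^d*d+1)^(2*m) : ℕ):ℝ) * (2^m * s^(m - 1))) := by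
        rw [ENNReal.ofReal_sum_of_nonneg]
        intro m _
        exact mul_nonneg (Nat.cast_nonneg _) (mul_nonneg (pow_nonneg (by norm_num) _) (pow_nonneg hs0 _))
    _ ≤ ENNReal.ofReal ((E:ℝ) * (K₀ * (θ^(M-1) * 2))) := by
        apply ENNReal.ofReal_le_ofReal
        have hterm : ∀ m ∈ Finset.Icc M E,
            ((E * (3^d*d+1)^(2*m) : ℕ):ℝ) * (2^m * s^(m - 1))
            = (E:ℝ) * (K₀ * θ^(m-1)) := by
          intro m hm
          rw [Finset.mem_Icc] at hm
          have hm1 : 1 ≤ m := le_trans hM hm.1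
          push_cast
          have hA : (D)^(2*m) * 2^m = K₀^m := by
            rw [hK₀, pow_mul, mul_pow]
          have hB : K₀^m = K₀ * K₀^(m-1) := by
            conv_lhs => rw [show m = 1 + (m-1) by omega]
            rw [pow_add, pow_one]
          have hC : θ^(m-1) = K₀^(m-1) * s^(m-1) := by
            rw [hθdef, mul_pow]
          rw [hD] at hA
          push_cast at hA
          calc (E:ℝ) * ((3^d*(d:ℝ)+1))^(2*m) * (2^m * s^(m - 1))
              = (E:ℝ) * ((((3^d*(d:ℝ)+1))^(2*m) * 2^m) * s^(m-1)) := by ring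
            _ = (E:ℝ) * (K₀^m * s^(m-1)) := by rw [hA]
            _ = (E:ℝ) * (K₀ * (K₀^(m-1) * s^(m-1))) := by rw [hB]; ring
            _ = (E:ℝ) * (K₀ * θ^(m-1)) := by rw [hC]
        rw [Finset.sum_congr rfl hterm, ← Finset.mul_sum, ← Finset.mul_sum]
        have := theta_sum_bound hθ0 (by rw [hθdef, hK₀, hD]; exact hθhalf) M E hM
        have hEnn : (0:ℝ) ≤ (E:ℝ) := Nat.cast_nonneg _
        nlinarith [mul_nonneg hEnn hK₀0, pow_nonneg hθ0 (M-1)]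

end Master

noncomputable section Final

open MeasureTheory Finset

lemma final_real_bound (d n : ℕ) (hn : 3 ≤ n) {q : ℝ} (hq0 : 0 ≤ q)
    (hsmall : ((3^d*d+1 : ℕ):ℝ)^2 * 2 * q ≤ Real.exp (-(2*(d:ℝ)+4))) :
    ((boxEdgeFinset d n).card : ℝ) * (((3^d*d+1 : ℕ):ℝ)^2 * 2 *
        ((((3^d*d+1 : ℕ):ℝ)^2 * 2 * q)^(⌈2 * Real.log n⌉₊ - 1) * 2))
      ≤ (3:ℝ)^d * (d:ℝ) * (((3^d*d+1 : ℕ):ℝ)^2 * 2) * 2 / n := by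
  set K₀ : ℝ := ((3^d*d+1 : ℕ):ℝ)^2 * 2 with hK
  have hK0 : 0 ≤ K₀ := by positivity
  set θ : ℝ := K₀ * q with hθ
  have hθ0 : 0 ≤ θ := mul_nonneg hK0 hq0
  set M : ℕ := ⌈2 * Real.log n⌉₊ with hM
  have hn1 : (1:ℝ) ≤ (n:ℝ) := by
    have : (3:ℝ) ≤ (n:ℝ) := by exact_mod_cast hn
    linarith
  have hnpos : (0:ℝ) < n := by linarith
  have hlog1 : 1 ≤ Real.log n := by
    rw [Real.le_log_iff_exp_le hnpos]
    calc Real.exp 1 ≤ 2.7182818286 := Real.exp_one_lt_d9.le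
      _ ≤ (3:ℝ) := by norm_num
      _ ≤ n := by exact_mod_cast hn
  have hM1 : 1 ≤ M := Nat.one_le_ceil_iff.2 (by linarith)
  have hMlog : Real.log n ≤ ((M:ℝ) - 1) := by
    have h := Nat.le_ceil (2 * Real.log n)
    rw [← hM] at h
    linarith
  have hMcast : ((M - 1 : ℕ):ℝ) = (M:ℝ) - 1 := by
    rw [Nat.cast_sub hM1, Nat.cast_one]
  have hθM : θ^(M-1) ≤ Real.exp (-(2*(d:ℝ)+4) * Real.log n) := by
    calc θ^(M-1) ≤ (Real.exp (-(2*(d:ℝ)+4)))^(M-1) :=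
          pow_le_pow_left₀ hθ0 hsmall _
      _ = Real.exp (((M-1 : ℕ):ℝ) * (-(2*(d:ℝ)+4))) := (Real.exp_nat_mul _ _).symm
      _ ≤ Real.exp (-(2*(d:ℝ)+4) * Real.log n) := by
          apply Real.exp_le_exp.2
          rw [hMcast]
          have hd0 : (0:ℝ) ≤ (d:ℝ) := Nat.cast_nonneg d
          nlinarith
  have hE : ((boxEdgeFinset d n).card : ℝ) ≤ 3^d * (d:ℝ) * (n:ℝ)^d := by
    have h1 := card_boxEdgeFinset_le d n
    have h1' : ((boxEdgeFinset d n).card:ℝ) ≤ (((2*n+1)^d * d : ℕ):ℝ) := Nat.cast_le.2 h1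
    have h2 : (((2*n+1)^d * d : ℕ):ℝ) = ((2*(n:ℝ)+1))^d * d := by push_cast; ring
    rw [h2] at h1'
    have h3 : (2*(n:ℝ)+1)^d ≤ (3*(n:ℝ))^d := pow_le_pow_left₀ (by linarith) (by linarith) d
    calc ((boxEdgeFinset d n).card:ℝ) ≤ (2*(n:ℝ)+1)^d * d := h1'
      _ ≤ (3*(n:ℝ))^d * d := mul_le_mul_of_nonneg_right h3 (Nat.cast_nonneg d)
      _ = 3^d * (n:ℝ)^d * d := by rw [mul_pow]
      _ = 3^d * (d:ℝ) * (n:ℝ)^d := by ring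
  have hnd : (n:ℝ)^d * Real.exp (-(2*(d:ℝ)+4) * Real.log n) ≤ 1/(n:ℝ) := by
    have hxd : (n:ℝ)^d = Real.exp ((d:ℝ) * Real.log n) := by
      conv_lhs => rw [← Real.exp_log hnpos]
      rw [← Real.exp_nat_mul]
    rw [hxd, ← Real.exp_add]
    have harg : (d:ℝ)*Real.log n + (-(2*(d:ℝ)+4) * Real.log n) ≤ -Real.log n := by
      have hd0 : (0:ℝ) ≤ (d:ℝ) := Nat.cast_nonneg d
      nlinarith
    calc Real.exp ((d:ℝ)*Real.log n + (-(2*(d:ℝ)+4) * Real.log n))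
        ≤ Real.exp (-Real.log n) := Real.exp_le_exp.2 harg
      _ = 1/(n:ℝ) := by rw [Real.exp_neg, Real.exp_log hnpos, one_div]
  calc ((boxEdgeFinset d n).card : ℝ) * (K₀ * (θ^(M-1) * 2))
      ≤ (3^d * (d:ℝ) * (n:ℝ)^d) * (K₀ * (Real.exp (-(2*(d:ℝ)+4) * Real.log n) * 2)) := by
        apply mul_le_mul hE ?_ ?_ ?_
        · exact mul_le_mul_of_nonneg_left
            (mul_le_mul_of_nonneg_right hθM (by norm_num)) hK0
        · exact mul_nonneg hK0 (mul_nonneg (pow_nonneg hθ0 _) (by norm_num))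
        · positivity
    _ = (3^d * (d:ℝ) * K₀ * 2) * ((n:ℝ)^d * Real.exp (-(2*(d:ℝ)+4) * Real.log n)) := by ring
    _ ≤ (3^d * (d:ℝ) * K₀ * 2) * (1/(n:ℝ)) := by
        apply mul_le_mul_of_nonneg_left hnd
        positivity
    _ = 3^d * (d:ℝ) * K₀ * 2 / n := by ring

end Final

open MeasureTheory Finset in
/-- For `d ≥ 2` there is `p* < 1` such that for `p > p*` there are
`c₁, c₂ > 0` such that a.a.s. every minimal cutset `B` of `B_d(n)` with `|B| ≥ c₁ log n`
contains at least `c₂ |B|` open edges. -/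
theorem minimal_cutsets_open_edges (d : ℕ) (hd : 2 ≤ d) :
    ∃ pstar : ℝ, pstar < 1 ∧ ∀ p : ℝ, pstar < p → p ≤ 1 →
      ∃ c₁ c₂ : ℝ, 0 < c₁ ∧ 0 < c₂ ∧
        Tendsto (fun n : ℕ => bondMeasure d n p
            {ω | ∀ v ∈ boxFinset d n, ∀ w ∈ boxFinset d n, ∀ B : Finset (EdgeZ d),
              IsMinimalCutset d n v w B → c₁ * Real.log n ≤ (B.card : ℝ) →
              c₂ * (B.card : ℝ) ≤ ((B.filter fun e => ω e = true).card : ℝ)})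
          atTop (nhds 1) := by
  classical
  have hd1 : 1 ≤ d := by omega
  set D : ℝ := ((3^d*d+1 : ℕ):ℝ) with hDdef
  have hD1 : (1:ℝ) ≤ D := by
    rw [hDdef]
    exact_mod_cast Nat.succ_le_succ (Nat.zero_le _)
  set K₀ : ℝ := D^2 * 2 with hK₀def
  have hK₀pos : (0:ℝ) < K₀ := by positivity
  set θ₀ : ℝ := Real.exp (-(2*(d:ℝ)+4)) with hθ₀def
  have hθ₀pos : 0 < θ₀ := Real.exp_pos _
  set ε : ℝ := min (1/4) ((θ₀ / K₀)^2) with hεdef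
  have hεpos : 0 < ε := lt_min (by norm_num) (by positivity)
  refine ⟨1 - ε, by linarith, ?_⟩
  intro p hp hp1
  have hε4 : ε ≤ 1/4 := min_le_left _ _
  have hp0 : 0 ≤ p := by linarith
  have hq0 : (0:ℝ) ≤ 1 - p := by linarith
  have hqε : 1 - p < ε := by linarith
  set s : ℝ := Real.sqrt (1-p) with hsdef
  have hs0 : 0 ≤ s := Real.sqrt_nonneg _
  have hsmall : K₀ * s ≤ θ₀ := by
    have h1 : s ≤ θ₀ / K₀ := by
      have h2 : s ≤ Real.sqrt ((θ₀/K₀)^2) :=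
        Real.sqrt_le_sqrt (le_trans hqε.le (min_le_right _ _))
      rwa [Real.sqrt_sq (by positivity)] at h2
    calc K₀ * s ≤ K₀ * (θ₀/K₀) := mul_le_mul_of_nonneg_left h1 hK₀pos.le
      _ = θ₀ := by field_simp
  have hθ₀half : θ₀ ≤ 1/2 := by
    have h5 : (2:ℝ) ≤ Real.exp (2*(d:ℝ)+4) := by
      have h6 := Real.add_one_le_exp (2*(d:ℝ)+4)
      have hd0 : (0:ℝ) ≤ (d:ℝ) := Nat.cast_nonneg d
      linarith
    have h7 : (Real.exp (2*(d:ℝ)+4))⁻¹ ≤ (2:ℝ)⁻¹ :=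
      inv_anti₀ (by norm_num) h5
    rw [hθ₀def, Real.exp_neg]
    calc (Real.exp (2*(d:ℝ)+4))⁻¹ ≤ (2:ℝ)⁻¹ := h7
      _ = 1/2 := by norm_num
  have hθhalf : D^2 * 2 * Real.sqrt (1-p) ≤ 1/2 := le_trans hsmall hθ₀half
  refine ⟨2, 1/2, by norm_num, by norm_num, ?_⟩
  set C₁ : ℝ := (3:ℝ)^d * (d:ℝ) * K₀ * 2 with hC₁def
  set G : ℕ → Set (EdgeZ d → Bool) := fun n =>
    {ω | ∀ v ∈ boxFinset d n, ∀ w ∈ boxFinset d n, ∀ B : Finset (EdgeZ d),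
      IsMinimalCutset d n v w B → 2 * Real.log n ≤ (B.card : ℝ) →
      1/2 * (B.card : ℝ) ≤ ((B.filter fun e => ω e = true).card : ℝ)} with hGdef
  have key : ∀ n : ℕ, 3 ≤ n →
      bondMeasure d n p ((G n)ᶜ) ≤ ENNReal.ofReal (C₁ / n) := by
    intro n hn
    set M : ℕ := ⌈2 * Real.log n⌉₊ with hMdef
    have hn1 : (1:ℝ) ≤ (n:ℝ) := by
      have : (3:ℝ) ≤ (n:ℝ) := by exact_mod_cast hn
      linarith
    have hnpos : (0:ℝ) < n := by linarith
    have hlog1 : 1 ≤ Real.log n := by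
      rw [Real.le_log_iff_exp_le hnpos]
      calc Real.exp 1 ≤ 2.7182818286 := Real.exp_one_lt_d9.le
        _ ≤ (3:ℝ) := by norm_num
        _ ≤ n := by exact_mod_cast hn
    have hM1 : 1 ≤ M := Nat.one_le_ceil_iff.2 (by linarith)
    have hsubset : (G n)ᶜ ⊆ ⋃ A ∈ (cutShaped d n M : Finset (Finset (EdgeZ d))), badA A := by
      intro ω hω
      rw [Set.mem_compl_iff, hGdef, Set.mem_setOf_eq] at hω
      push_neg at hω
      obtain ⟨v, hv, w, hw, B, hmin, hsize, hopen⟩ := hω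
      have hBsub : B ⊆ boxEdgeFinset d n := hmin.1.1
      have hMle : M ≤ B.card := Nat.ceil_le.2 hsize
      have hBne : B.Nonempty := Finset.card_pos.1 (lt_of_lt_of_le hM1 hMle)
      obtain ⟨e₀, he₀⟩ := hBne
      have hconn := mincut_Hconn hv hmin he₀
      have hBcut : B ∈ cutShaped d n M := by
        rw [cutShaped, Finset.mem_filter]
        exact ⟨Finset.mem_powerset.2 hBsub, hMle, ⟨e₀, he₀⟩, e₀, he₀, hconn⟩
      refine Set.mem_biUnion hBcut ?_
      rw [badA, Set.mem_setOf_eq]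
      have h2 : 2 * ((B.filter fun e => ω e = true).card : ℝ) < (B.card : ℝ) := by
        linarith
      exact_mod_cast h2
    calc bondMeasure d n p ((G n)ᶜ)
        ≤ bondMeasure d n p (⋃ A ∈ (cutShaped d n M : Finset (Finset (EdgeZ d))), badA A) :=
          measure_mono hsubset
      _ ≤ ENNReal.ofReal ((((boxEdgeFinset d n).card : ℝ)) * ((((3^d*d+1 : ℕ):ℝ)^2 * 2) *
            ((((3^d*d+1 : ℕ):ℝ)^2 * 2 * Real.sqrt (1-p))^(M-1) * 2))) :=
          master_bound d n hd1 hp0 hp1 M hM1 hθhalf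
      _ ≤ ENNReal.ofReal (C₁ / n) := by
          apply ENNReal.ofReal_le_ofReal
          have := final_real_bound d n hn hs0 (le_trans (le_refl _) hsmall)
          rw [hC₁def, hK₀def, hDdef]
          exact this
  -- squeeze
  have hofReal : Tendsto (fun n : ℕ => ENNReal.ofReal (C₁ / n)) atTop (nhds 0) := by
    have h0 := ENNReal.tendsto_ofReal (tendsto_const_div_atTop_nhds_zero_nat C₁)
    rwa [ENNReal.ofReal_zero] at h0
  have hlowlim : Tendsto (fun n : ℕ => 1 - ENNReal.ofReal (C₁ / n)) atTop (nhds 1) := by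
    have h1 := ENNReal.Tendsto.sub (tendsto_const_nhds (x := (1:ℝ≥0∞))) hofReal
      (Or.inl ENNReal.one_ne_top)
    simpa using h1
  apply tendsto_of_tendsto_of_tendsto_of_le_of_le' hlowlim tendsto_const_nhds
  · filter_upwards [eventually_ge_atTop 3] with n hn
    have hcompl : (1:ℝ≥0∞) ≤ bondMeasure d n p (G n) + bondMeasure d n p ((G n)ᶜ) := by
      have h1 : (1:ℝ≥0∞) = bondMeasure d n p (Set.univ) := (measure_univ).symm
      rw [h1, ← Set.union_compl_self (G n)]
      exact measure_union_le _ _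
    have h2 : (1:ℝ≥0∞) ≤ bondMeasure d n p (G n) + ENNReal.ofReal (C₁ / n) :=
      le_trans hcompl (add_le_add_right (key n hn) _)
    exact tsub_le_iff_right.2 h2
  · filter_upwards with n
    exact prob_le_one
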